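/- arXiv:1408.4902 — 6 statements merged into one kernel-verified Lean document; each statement's English description precedes it below -/
import Mathlib

section
/- Descartes' Circle Theorem (externally tangent case): Let c₁, c₂, c₃, c₄ be points of the Euclidean plane and r₁, r₂, r₃, r₄ > 0 be real numbers such that the four circles with centers cᵢ and radii rᵢ are pairwise externally tangent, i.e. dist(cᵢ, cⱼ) = rᵢ + rⱼ for all i ≠ j. Then (1/r₁ + 1/r₂ + 1/r₃ + 1/r₄)² = 2·(1/r₁² + 1/r₂² + 1/r₃² + 1/r₄²). -/
/-- **Descartes' Circle Theorem** (externally tangent case). If four circles in the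
Euclidean plane, with centers `c i` and radii `r i > 0`, are pairwise externally tangent
(i.e. `dist (c i) (c j) = r i + r j` for `i ≠ j`), then
`(1/r₁ + 1/r₂ + 1/r₃ + 1/r₄)² = 2 (1/r₁² + 1/r₂² + 1/r₃² + 1/r₄²)`. -/
theorem descartes_circle_theorem
    (c : Fin 4 → EuclideanSpace ℝ (Fin 2)) (r : Fin 4 → ℝ)
    (hr : ∀ i, 0 < r i)
    (htan : ∀ i j, i ≠ j → dist (c i) (c j) = r i + r j) :
    (1 / r 0 + 1 / r 1 + 1 / r 2 + 1 / r 3) ^ 2 =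
      2 * ((1 / r 0) ^ 2 + (1 / r 1) ^ 2 + (1 / r 2) ^ 2 + (1 / r 3) ^ 2) := by
  -- squared distances in coordinates
  have hsq : ∀ i j : Fin 4, i ≠ j →
      (c i 0 - c j 0) ^ 2 + (c i 1 - c j 1) ^ 2 = (r i + r j) ^ 2 := by
    intro i j hij
    have h := htan i j hij
    have : dist (c i) (c j) ^ 2 = (r i + r j) ^ 2 := by rw [h]
    rw [EuclideanSpace.dist_eq, Real.sq_sqrt (by positivity)] at this
    simpa [Fin.sum_univ_two, Real.dist_eq, sq_abs] using this
  have h01 := hsq 0 1 (by decide)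
  have h02 := hsq 0 2 (by decide)
  have h03 := hsq 0 3 (by decide)
  have h12 := hsq 1 2 (by decide)
  have h13 := hsq 1 3 (by decide)
  have h23 := hsq 2 3 (by decide)
  set a := (r 0 + r 1) ^ 2 with ha
  set b := (r 0 + r 2) ^ 2 with hb
  set cc := (r 0 + r 3) ^ 2 with hcc
  set d := (r 1 + r 2) ^ 2 with hd
  set e := (r 1 + r 3) ^ 2 with he
  set f := (r 2 + r 3) ^ 2 with hf
  -- Cayley–Menger determinant of four planar points vanishes
  have hQ : d*e*f - cc*d*f - cc*d*e + cc*d^2 + cc^2*d - b*e*f + b*e^2 - b*d*e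
      + b*cc*f - b*cc*e - b*cc*d + b^2*e + a*f^2 - a*e*f - a*d*f - a*cc*f
      + a*cc*e - a*cc*d - a*b*f - a*b*e + a*b*d + a^2*f = 0 := by
    rw [← h01, ← h02, ← h03, ← h12, ← h13, ← h23]
    ring
  rw [ha, hb, hcc, hd, he, hf] at hQ
  have h0 := (hr 0).ne'
  have h1 := (hr 1).ne'
  have h2 := (hr 2).ne'
  have h3 := (hr 3).ne'
  have q : (r 1*r 2*r 3 + r 0*r 2*r 3 + r 0*r 1*r 3 + r 0*r 1*r 2)^2 =
      2*((r 1*r 2*r 3)^2 + (r 0*r 2*r 3)^2 + (r 0*r 1*r 3)^2 + (r 0*r 1*r 2)^2) := by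
    linear_combination (-(1:ℝ)/16) * hQ
  field_simp
  linear_combination q
end

section
/- Let C₁, C₂, C₃ be three circles in the Euclidean plane with centers c₁, c₂, c₃ and radii r₁ ≤ r₂ ≤ r₃ (all positive) that are pairwise externally tangent, i.e. dist(cᵢ, cⱼ) = rᵢ + rⱼ for i ≠ j, and for i ≠ j let p_{ij} = cᵢ + (rᵢ/(rᵢ+rⱼ))·(cⱼ − cᵢ) be the point of tangency of Cᵢ and Cⱼ. Suppose a circle with center c and radius r > 0 lies completely inside the curvilinear triangle bounded by the three circles, in the sense that the closed disk closedBall(c, r) is contained in the convex hull of {p₁₂, p₁₃, p₂₃} and the open disk ball(c, r) is disjoint from each open disk ball(cᵢ, rᵢ) for i = 1, 2, 3. Then r ≤ r₂/2 (at most half the median of the three radii). -/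
set_option maxHeartbeats 1000000

open Metric

private lemma dist_sq_segment {E : Type*} [NormedAddCommGroup E] [InnerProductSpace ℝ E]
    (x y z : E) (t : ℝ) :
    dist (x + t • (y - x)) z ^ 2
      = (1 - t) * dist x z ^ 2 + t * dist y z ^ 2 - t * (1 - t) * dist x y ^ 2 := by
  simp only [dist_eq_norm, ← real_inner_self_eq_norm_sq]
  simp only [inner_sub_left, inner_sub_right, inner_add_left, inner_add_right,
    real_inner_smul_left, real_inner_smul_right]
  ring

private lemma dist_seg_left {E : Type*} [NormedAddCommGroup E] [NormedSpace ℝ E]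
    (x y : E) (t : ℝ) (ht : 0 ≤ t) :
    dist (x + t • (y - x)) x = t * dist x y := by
  rw [dist_eq_norm, add_sub_cancel_left, norm_smul, Real.norm_eq_abs, abs_of_nonneg ht,
    ← norm_sub_rev, dist_eq_norm]

private lemma dist_seg_right {E : Type*} [NormedAddCommGroup E] [NormedSpace ℝ E]
    (x y : E) (t : ℝ) (ht : t ≤ 1) :
    dist (x + t • (y - x)) y = (1 - t) * dist x y := by
  have h : x + t • (y - x) - y = (1 - t) • (x - y) := by
    rw [sub_smul, one_smul, smul_sub, smul_sub]; abel
  rw [dist_eq_norm, h, norm_smul, Real.norm_eq_abs, abs_of_nonneg (by linarith),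
    dist_eq_norm]

/-- Any circle lying completely inside the curvilinear triangle bounded by three
pairwise externally tangent circles with radii `r₁ ≤ r₂ ≤ r₃` has radius at most
half the median radius `r₂`. -/
theorem circle_in_curvilinear_triangle_radius_le_half_median
    (c₁ c₂ c₃ c : EuclideanSpace ℝ (Fin 2)) (r₁ r₂ r₃ r : ℝ)
    (hr₁ : 0 < r₁) (hr₂ : 0 < r₂) (hr₃ : 0 < r₃) (hr : 0 < r)
    (h₁₂ : r₁ ≤ r₂) (h₂₃ : r₂ ≤ r₃)
    (d₁₂ : dist c₁ c₂ = r₁ + r₂) (d₁₃ : dist c₁ c₃ = r₁ + r₃)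
    (d₂₃ : dist c₂ c₃ = r₂ + r₃)
    (hsub : Metric.closedBall c r ⊆
      convexHull ℝ {c₁ + (r₁ / (r₁ + r₂)) • (c₂ - c₁),
                    c₁ + (r₁ / (r₁ + r₃)) • (c₃ - c₁),
                    c₂ + (r₂ / (r₂ + r₃)) • (c₃ - c₂)})
    (hdisj₁ : Disjoint (Metric.ball c r) (Metric.ball c₁ r₁))
    (hdisj₂ : Disjoint (Metric.ball c r) (Metric.ball c₂ r₂))
    (hdisj₃ : Disjoint (Metric.ball c r) (Metric.ball c₃ r₃)) :
    r ≤ r₂ / 2 := by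
  have hs₁₂ : (0:ℝ) < r₁ + r₂ := by linarith
  have hs₁₃ : (0:ℝ) < r₁ + r₃ := by linarith
  have hs₂₃ : (0:ℝ) < r₂ + r₃ := by linarith
  set p₁₂ := c₁ + (r₁ / (r₁ + r₂)) • (c₂ - c₁) with hp₁₂
  set p₁₃ := c₁ + (r₁ / (r₁ + r₃)) • (c₃ - c₁) with hp₁₃
  set p₂₃ := c₂ + (r₂ / (r₂ + r₃)) • (c₃ - c₂) with hp₂₃
  -- distances to tangent circles' centers
  have dA1 : dist p₁₂ c₁ = r₁ := by
    rw [hp₁₂, dist_seg_left _ _ _ (by positivity), d₁₂]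
    field_simp
  have dA2 : dist p₁₂ c₂ = r₂ := by
    rw [hp₁₂, dist_seg_right _ _ _ (by rw [div_le_one hs₁₂]; linarith), d₁₂]
    field_simp; ring
  have dB1 : dist p₁₃ c₁ = r₁ := by
    rw [hp₁₃, dist_seg_left _ _ _ (by positivity), d₁₃]
    field_simp
  have dB3 : dist p₁₃ c₃ = r₃ := by
    rw [hp₁₃, dist_seg_right _ _ _ (by rw [div_le_one hs₁₃]; linarith), d₁₃]
    field_simp; ring
  have dC2 : dist p₂₃ c₂ = r₂ := by
    rw [hp₂₃, dist_seg_left _ _ _ (by positivity), d₂₃]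
    field_simp
  have dC3 : dist p₂₃ c₃ = r₃ := by
    rw [hp₂₃, dist_seg_right _ _ _ (by rw [div_le_one hs₂₃]; linarith), d₂₃]
    field_simp; ring
  -- Stewart-type distance formulas
  have eA : dist p₁₂ c₃ ^ 2 = r₃ ^ 2 + 4 * r₁ * r₂ * r₃ / (r₁ + r₂) := by
    rw [hp₁₂, dist_sq_segment, d₁₃, d₂₃, d₁₂]
    field_simp
    ring
  have eB : dist p₁₃ c₂ ^ 2 = r₂ ^ 2 + 4 * r₁ * r₂ * r₃ / (r₁ + r₃) := by
    rw [hp₁₃, dist_sq_segment, dist_comm c₃ c₂, d₁₂, d₂₃, d₁₃]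
    field_simp
    ring
  have eC : dist p₂₃ c₁ ^ 2 = r₁ ^ 2 + 4 * r₁ * r₂ * r₃ / (r₂ + r₃) := by
    rw [hp₂₃, dist_sq_segment, dist_comm c₂ c₁, dist_comm c₃ c₁, d₁₂, d₁₃, d₂₃]
    field_simp
    ring
  have dA3 : dist p₁₂ c₃ ≤ r₂ + r₃ := by
    have h1 : (0:ℝ) ≤ dist p₁₂ c₃ := dist_nonneg
    have hf : 4 * r₁ * r₂ * r₃ / (r₁ + r₂) ≤ 2 * r₂ * r₃ := by
      rw [div_le_iff₀ hs₁₂]; nlinarith [mul_pos hr₂ hr₃]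
    have h2 : dist p₁₂ c₃ ^ 2 ≤ (r₂ + r₃) ^ 2 := by rw [eA]; nlinarith [sq_nonneg r₂]
    have h2' := Real.sqrt_le_sqrt h2
    rwa [Real.sqrt_sq h1, Real.sqrt_sq (by positivity : (0:ℝ) ≤ r₂ + r₃)] at h2' 
  have dB2 : dist p₁₃ c₂ ≤ 5 / 2 * r₂ := by
    have h1 : (0:ℝ) ≤ dist p₁₃ c₂ := dist_nonneg
    have hf : 4 * r₁ * r₂ * r₃ / (r₁ + r₃) ≤ 4 * r₂ ^ 2 := by
      rw [div_le_iff₀ hs₁₃]; nlinarith [mul_pos hr₂ hr₃, mul_pos hr₁ hr₂]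
    have h2 : dist p₁₃ c₂ ^ 2 ≤ (5 / 2 * r₂) ^ 2 := by rw [eB]; nlinarith [sq_nonneg r₂]
    have h2' := Real.sqrt_le_sqrt h2
    rwa [Real.sqrt_sq h1, Real.sqrt_sq (by positivity : (0:ℝ) ≤ 5 / 2 * r₂)] at h2' 
  have dC1 : dist p₂₃ c₁ ≤ r₁ + 3 / 2 * r₂ := by
    have h1 : (0:ℝ) ≤ dist p₂₃ c₁ := dist_nonneg
    have hf : 4 * r₁ * r₂ * r₃ / (r₂ + r₃) ≤ 4 * r₁ * r₂ := by
      rw [div_le_iff₀ hs₂₃]; nlinarith [mul_pos hr₁ hr₂]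
    have h2 : dist p₂₃ c₁ ^ 2 ≤ (r₁ + 3 / 2 * r₂) ^ 2 := by
      rw [eC]; nlinarith [mul_pos hr₁ hr₂, mul_pos hr₂ hr₂]
    have h2' := Real.sqrt_le_sqrt h2
    rwa [Real.sqrt_sq h1, Real.sqrt_sq (by positivity : (0:ℝ) ≤ r₁ + 3 / 2 * r₂)] at h2' 
  -- convexity argument
  have hc : c ∈ convexHull ℝ ({p₁₂, p₁₃, p₂₃} : Set (EuclideanSpace ℝ (Fin 2))) :=
    hsub (mem_closedBall_self hr.le)
  have hconv : ConvexOn ℝ Set.univ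
      (fun x : EuclideanSpace ℝ (Fin 2) => dist x c₁ + dist x c₂ + dist x c₃) :=
    ((convexOn_univ_dist c₁).add (convexOn_univ_dist c₂)).add (convexOn_univ_dist c₃)
  obtain ⟨y, hy, hle⟩ := hconv.exists_ge_of_mem_convexHull (Set.subset_univ _) hc
  -- lower bounds from disjointness
  have l₁ : r + r₁ ≤ dist c c₁ := (disjoint_ball_ball_iff hr hr₁).mp hdisj₁
  have l₂ : r + r₂ ≤ dist c c₂ := (disjoint_ball_ball_iff hr hr₂).mp hdisj₂
  have l₃ : r + r₃ ≤ dist c c₃ := (disjoint_ball_ball_iff hr hr₃).mp hdisj₃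
  simp only [Set.mem_insert_iff, Set.mem_singleton_iff] at hy
  rcases hy with rfl | rfl | rfl
  · rw [dA1, dA2] at hle; linarith
  · rw [dB1, dB3] at hle; linarith
  · rw [dC2, dC3] at hle; linarith
end

section
/- Let C₁, C₂, C₃ be three circles in the Euclidean plane with centers c₁, c₂, c₃ and positive radii r₁, r₂, r₃ that are pairwise externally tangent, i.e. dist(cᵢ, cⱼ) = rᵢ + rⱼ for i ≠ j, and for i ≠ j let p_{ij} = cᵢ + (rᵢ/(rᵢ+rⱼ))·(cⱼ − cᵢ) be the point of tangency of Cᵢ and Cⱼ. Suppose a circle with center c and radius r > 0 satisfies: the closed disk closedBall(c, r) is contained in the convex hull of {p₁₂, p₁₃, p₂₃}, the open disk ball(c, r) is disjoint from each ball(cᵢ, rᵢ), and the circle is externally tangent to each of the three circles, i.e. dist(c, cᵢ) = r + rᵢ for i = 1, 2, 3. Then 1/r = 1/r₁ + 1/r₂ + 1/r₃ + 2·√(1/(r₁r₂) + 1/(r₂r₃) + 1/(r₃r₁)). -/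
open scoped RealInnerProductSpace

set_option maxHeartbeats 1000000 in
/-- The inner Soddy circle: if a circle of center `c` and radius `r > 0` lies in the
curvilinear triangular gap between three pairwise externally tangent circles and is
externally tangent to all three of them, then
`1/r = 1/r₁ + 1/r₂ + 1/r₃ + 2√(1/(r₁r₂) + 1/(r₂r₃) + 1/(r₃r₁))`. -/
theorem inner_soddy_circle_curvature
    (c₁ c₂ c₃ c : EuclideanSpace ℝ (Fin 2)) (r₁ r₂ r₃ r : ℝ)
    (hr₁ : 0 < r₁) (hr₂ : 0 < r₂) (hr₃ : 0 < r₃) (hr : 0 < r)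
    (d₁₂ : dist c₁ c₂ = r₁ + r₂) (d₁₃ : dist c₁ c₃ = r₁ + r₃)
    (d₂₃ : dist c₂ c₃ = r₂ + r₃)
    (hsub : Metric.closedBall c r ⊆
      convexHull ℝ {c₁ + (r₁ / (r₁ + r₂)) • (c₂ - c₁),
                    c₁ + (r₁ / (r₁ + r₃)) • (c₃ - c₁),
                    c₂ + (r₂ / (r₂ + r₃)) • (c₃ - c₂)})
    (hdisj₁ : Disjoint (Metric.ball c r) (Metric.ball c₁ r₁))
    (hdisj₂ : Disjoint (Metric.ball c r) (Metric.ball c₂ r₂))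
    (hdisj₃ : Disjoint (Metric.ball c r) (Metric.ball c₃ r₃))
    (t₁ : dist c c₁ = r + r₁) (t₂ : dist c c₂ = r + r₂) (t₃ : dist c c₃ = r + r₃) :
    1 / r = 1 / r₁ + 1 / r₂ + 1 / r₃ +
      2 * Real.sqrt (1 / (r₁ * r₂) + 1 / (r₂ * r₃) + 1 / (r₃ * r₁)) := by
  have hr₁₂ : (0:ℝ) < r₁ + r₂ := by linarith
  have hr₁₃ : (0:ℝ) < r₁ + r₃ := by linarith
  have hr₂₃ : (0:ℝ) < r₂ + r₃ := by linarith
  -- c lies in the convex hull of the three centers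
  have hc : c ∈ convexHull ℝ ({c₁, c₂, c₃} : Set (EuclideanSpace ℝ (Fin 2))) := by
    have hcmem := hsub (Metric.mem_closedBall_self hr.le)
    refine convexHull_min ?_ (convex_convexHull ℝ _) hcmem
    have hseg : ∀ (p q : EuclideanSpace ℝ (Fin 2)) (s : ℝ), 0 ≤ s → s ≤ 1 →
        p ∈ ({c₁, c₂, c₃} : Set (EuclideanSpace ℝ (Fin 2))) →
        q ∈ ({c₁, c₂, c₃} : Set (EuclideanSpace ℝ (Fin 2))) →
        p + s • (q - p) ∈ convexHull ℝ ({c₁, c₂, c₃} : Set (EuclideanSpace ℝ (Fin 2))) := by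
      intro p q s hs0 hs1 hp hq
      have hmem : p + s • (q - p) ∈ segment ℝ p q :=
        ⟨1 - s, s, by linarith, hs0, by ring, by module⟩
      exact segment_subset_convexHull hp hq hmem
    intro x hx
    simp only [Set.mem_insert_iff, Set.mem_singleton_iff] at hx
    rcases hx with rfl | rfl | rfl
    · exact hseg c₁ c₂ _ (by positivity) (by rw [div_le_one hr₁₂]; linarith)
        (by simp) (by simp)
    · exact hseg c₁ c₃ _ (by positivity) (by rw [div_le_one hr₁₃]; linarith)
        (by simp) (by simp)
    · exact hseg c₂ c₃ _ (by positivity) (by rw [div_le_one hr₂₃]; linarith)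
        (by simp) (by simp)
  rw [show ({c₁, c₂, c₃} : Set (EuclideanSpace ℝ (Fin 2))) = insert c₁ {c₂, c₃} from rfl,
    convexHull_insert ⟨c₂, by simp⟩, convexHull_pair] at hc
  rw [mem_convexJoin] at hc
  obtain ⟨x, hx, z, hz, hcz⟩ := hc
  rw [Set.mem_singleton_iff] at hx
  rw [hx] at hcz
  clear hx
  obtain ⟨b, e, hb, he, hbe, hzeq⟩ := hz
  obtain ⟨a, t, ha, ht, hat, hceq⟩ := hcz
  have hw : c - c₁ = (t*b) • (c₂ - c₁) + (t*e) • (c₃ - c₁) := by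
    have ha' : a = 1 - t := by linarith
    have he' : e = 1 - b := by linarith
    rw [← hceq, ← hzeq, ha', he']; module
  -- norms
  have nu : ‖c₂ - c₁‖ = r₁ + r₂ := by rw [← dist_eq_norm, dist_comm]; exact d₁₂
  have nv : ‖c₃ - c₁‖ = r₁ + r₃ := by rw [← dist_eq_norm, dist_comm]; exact d₁₃
  have nw : ‖c - c₁‖ = r + r₁ := by rw [← dist_eq_norm]; exact t₁
  -- inner products
  have iuu : ⟪c₂ - c₁, c₂ - c₁⟫ = (r₁+r₂)^2 := by
    rw [real_inner_self_eq_norm_sq, nu]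
  have ivv : ⟪c₃ - c₁, c₃ - c₁⟫ = (r₁+r₃)^2 := by
    rw [real_inner_self_eq_norm_sq, nv]
  have iww : ⟪c - c₁, c - c₁⟫ = (r+r₁)^2 := by
    rw [real_inner_self_eq_norm_sq, nw]
  have iuv : ⟪c₂ - c₁, c₃ - c₁⟫ = r₁^2 + r₁*r₂ + r₁*r₃ - r₂*r₃ := by
    have h := norm_sub_sq_real (c₂ - c₁) (c₃ - c₁)
    rw [show (c₂ - c₁) - (c₃ - c₁) = c₂ - c₃ by abel, ← dist_eq_norm, d₂₃, nu, nv] at h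
    linear_combination (1/2) * h
  have iwu : ⟪c - c₁, c₂ - c₁⟫ = r₁^2 + r₁*r₂ + r*r₁ - r*r₂ := by
    have h := norm_sub_sq_real (c - c₁) (c₂ - c₁)
    rw [show (c - c₁) - (c₂ - c₁) = c - c₂ by abel, ← dist_eq_norm, t₂, nw, nu] at h
    linear_combination (1/2) * h
  have iwv : ⟪c - c₁, c₃ - c₁⟫ = r₁^2 + r₁*r₃ + r*r₁ - r*r₃ := by
    have h := norm_sub_sq_real (c - c₁) (c₃ - c₁)
    rw [show (c - c₁) - (c₃ - c₁) = c - c₃ by abel, ← dist_eq_norm, t₃, nw, nv] at h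
    linear_combination (1/2) * h
  -- the three scalar equations
  have h1 : (t*b)*((r₁+r₂)^2) + (t*e)*(r₁^2 + r₁*r₂ + r₁*r₃ - r₂*r₃)
      = r₁^2 + r₁*r₂ + r*r₁ - r*r₂ := by
    have h := iwu
    rw [hw, inner_add_left, real_inner_smul_left, real_inner_smul_left,
      real_inner_comm (c₂ - c₁) (c₃ - c₁), iuu, iuv] at h
    linear_combination h
  have h2 : (t*b)*(r₁^2 + r₁*r₂ + r₁*r₃ - r₂*r₃) + (t*e)*((r₁+r₃)^2)
      = r₁^2 + r₁*r₃ + r*r₁ - r*r₃ := by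
    have h := iwv
    rw [hw, inner_add_left, real_inner_smul_left, real_inner_smul_left, iuv, ivv] at h
    linear_combination h
  have h3 : (t*b)^2*((r₁+r₂)^2) + 2*(t*b)*(t*e)*(r₁^2 + r₁*r₂ + r₁*r₃ - r₂*r₃)
      + (t*e)^2*((r₁+r₃)^2) = (r+r₁)^2 := by
    have h := iww
    rw [hw] at h
    simp only [inner_add_left, inner_add_right, real_inner_smul_left, real_inner_smul_right,
      real_inner_comm (c₂ - c₁) (c₃ - c₁), iuu, iuv, ivv] at h
    linear_combination h
  -- barycentric numerators
  have hG : (0:ℝ) < 4*r₁*r₂*r₃*(r₁+r₂+r₃) := by positivity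
  have hB : (t*b) * (4*r₁*r₂*r₃*(r₁+r₂+r₃))
      = 2*(r₁*r₂*r₃*(r₁+r₃) + r*(r₁*r₃*(r₁+r₃) - r₂*(r₁^2+r₃^2))) := by
    linear_combination ((r₁+r₃)^2)*h1 - (r₁^2 + r₁*r₂ + r₁*r₃ - r₂*r₃)*h2
  have hC : (t*e) * (4*r₁*r₂*r₃*(r₁+r₂+r₃))
      = 2*(r₁*r₂*r₃*(r₁+r₂) + r*(r₁*r₂*(r₁+r₂) - r₃*(r₁^2+r₂^2))) := by
    linear_combination ((r₁+r₂)^2)*h2 - (r₁^2 + r₁*r₂ + r₁*r₃ - r₂*r₃)*h1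
  -- Descartes quadratic
  have hQ : (r₁*r₂*r₃ - (r₁*r₂ + r₂*r₃ + r₃*r₁)*r)^2
      = 4*(r₁*r₂*r₃)*(r₁+r₂+r₃)*r^2 := by
    have key : 16*(r₁*r₂*r₃)*(r₁+r₂+r₃) *
        ((r₁*r₂*r₃ - (r₁*r₂ + r₂*r₃ + r₃*r₁)*r)^2 - 4*(r₁*r₂*r₃)*(r₁+r₂+r₃)*r^2) = 0 := by
      linear_combination ((4*r₁*r₂*r₃*(r₁+r₂+r₃))^2)*h3
        - (((t*b)*(4*r₁*r₂*r₃*(r₁+r₂+r₃))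
            + 2*(r₁*r₂*r₃*(r₁+r₃) + r*(r₁*r₃*(r₁+r₃) - r₂*(r₁^2+r₃^2))))*((r₁+r₂)^2)
          + 2*(r₁^2 + r₁*r₂ + r₁*r₃ - r₂*r₃)*((t*e)*(4*r₁*r₂*r₃*(r₁+r₂+r₃))))*hB
        - (((t*e)*(4*r₁*r₂*r₃*(r₁+r₂+r₃))
            + 2*(r₁*r₂*r₃*(r₁+r₂) + r*(r₁*r₂*(r₁+r₂) - r₃*(r₁^2+r₂^2))))*((r₁+r₃)^2)
          + 2*(r₁^2 + r₁*r₂ + r₁*r₃ - r₂*r₃)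
            *(2*(r₁*r₂*r₃*(r₁+r₃) + r*(r₁*r₃*(r₁+r₃) - r₂*(r₁^2+r₃^2)))))*hC
    have h16 : (16:ℝ)*(r₁*r₂*r₃)*(r₁+r₂+r₃) ≠ 0 := by positivity
    have := mul_eq_zero.mp key
    rcases this with h | h
    · exact absurd h h16
    · linarith
  -- sign selection
  have hM : 0 ≤ r₁*r₂*r₃ - (r₁*r₂ + r₂*r₃ + r₃*r₁)*r := by
    by_contra hcon
    push_neg at hcon
    have hm : 0 < (r₁*r₂ + r₂*r₃ + r₃*r₁)*r - r₁*r₂*r₃ := by linarith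
    have hQ' : ((r₁*r₂ + r₂*r₃ + r₃*r₁)*r - r₁*r₂*r₃)^2
        = 4*(r₁*r₂*r₃)*(r₁+r₂+r₃)*r^2 := by linear_combination hQ
    have htsum : t*b + t*e = t := by linear_combination t*hbe
    have ht1 : 0 ≤ 1 - (t*b + t*e) := by linarith
    have hAineq : (r₂+r₃)*((r₁*r₂ + r₂*r₃ + r₃*r₁)*r - r₁*r₂*r₃)
        ≤ 2*(r₁+r₂+r₃)*r*r₂*r₃ := by
      have h0 : (0:ℝ) ≤ (4*r₁*r₂*r₃*(r₁+r₂+r₃)) * (1 - (t*b + t*e)) :=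
        mul_nonneg hG.le ht1
      linarith [hB, hC, h0]
    have hBineq : (r₁+r₃)*((r₁*r₂ + r₂*r₃ + r₃*r₁)*r - r₁*r₂*r₃)
        ≤ 2*(r₁+r₂+r₃)*r*r₁*r₃ := by
      have h0 : (0:ℝ) ≤ (t*b) * (4*r₁*r₂*r₃*(r₁+r₂+r₃)) :=
        mul_nonneg (mul_nonneg ht hb) hG.le
      linarith [hB, h0]
    have hCineq : (r₁+r₂)*((r₁*r₂ + r₂*r₃ + r₃*r₁)*r - r₁*r₂*r₃)
        ≤ 2*(r₁+r₂+r₃)*r*r₁*r₂ := by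
      have h0 : (0:ℝ) ≤ (t*e) * (4*r₁*r₂*r₃*(r₁+r₂+r₃)) :=
        mul_nonneg (mul_nonneg ht he) hG.le
      linarith [hC, h0]
    have b1 : 2*r*r₁*(r₂+r₃) ≤ (r₁*r₂ + r₂*r₃ + r₃*r₁)*r - r₁*r₂*r₃ := by
      have hpos : (0:ℝ) < 2*(r₁+r₂+r₃)*r*r₂*r₃ := by positivity
      have step := mul_le_mul_of_nonneg_right hAineq hm.le
      have hQA : (r₂+r₃)*(((r₁*r₂ + r₂*r₃ + r₃*r₁)*r - r₁*r₂*r₃)^2)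
          = (r₂+r₃)*(4*(r₁*r₂*r₃)*(r₁+r₂+r₃)*r^2) := by
        linear_combination (r₂+r₃)*hQ'
      have hx : (2*(r₁+r₂+r₃)*r*r₂*r₃) * (2*r*r₁*(r₂+r₃))
          ≤ (2*(r₁+r₂+r₃)*r*r₂*r₃) * ((r₁*r₂ + r₂*r₃ + r₃*r₁)*r - r₁*r₂*r₃) := by
        linarith [step, hQA]
      exact le_of_mul_le_mul_left hx hpos
    have b2 : 2*r*r₂*(r₁+r₃) ≤ (r₁*r₂ + r₂*r₃ + r₃*r₁)*r - r₁*r₂*r₃ := by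
      have hpos : (0:ℝ) < 2*(r₁+r₂+r₃)*r*r₁*r₃ := by positivity
      have step := mul_le_mul_of_nonneg_right hBineq hm.le
      have hQB : (r₁+r₃)*(((r₁*r₂ + r₂*r₃ + r₃*r₁)*r - r₁*r₂*r₃)^2)
          = (r₁+r₃)*(4*(r₁*r₂*r₃)*(r₁+r₂+r₃)*r^2) := by
        linear_combination (r₁+r₃)*hQ'
      have hx : (2*(r₁+r₂+r₃)*r*r₁*r₃) * (2*r*r₂*(r₁+r₃))
          ≤ (2*(r₁+r₂+r₃)*r*r₁*r₃) * ((r₁*r₂ + r₂*r₃ + r₃*r₁)*r - r₁*r₂*r₃) := by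
        linarith [step, hQB]
      exact le_of_mul_le_mul_left hx hpos
    have b3 : 2*r*r₃*(r₁+r₂) ≤ (r₁*r₂ + r₂*r₃ + r₃*r₁)*r - r₁*r₂*r₃ := by
      have hpos : (0:ℝ) < 2*(r₁+r₂+r₃)*r*r₁*r₂ := by positivity
      have step := mul_le_mul_of_nonneg_right hCineq hm.le
      have hQC : (r₁+r₂)*(((r₁*r₂ + r₂*r₃ + r₃*r₁)*r - r₁*r₂*r₃)^2)
          = (r₁+r₂)*(4*(r₁*r₂*r₃)*(r₁+r₂+r₃)*r^2) := by
        linear_combination (r₁+r₂)*hQ'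
      have hx : (2*(r₁+r₂+r₃)*r*r₁*r₂) * (2*r*r₃*(r₁+r₂))
          ≤ (2*(r₁+r₂+r₃)*r*r₁*r₂) * ((r₁*r₂ + r₂*r₃ + r₃*r₁)*r - r₁*r₂*r₃) := by
        linarith [step, hQC]
      exact le_of_mul_le_mul_left hx hpos
    linarith [b1, b2, b3, mul_pos (mul_pos hr₁ hr₂) hr₃,
      mul_pos hr (mul_pos hr₁ hr₂), mul_pos hr (mul_pos hr₂ hr₃),
      mul_pos hr (mul_pos hr₃ hr₁)]
  -- conclude
  set s := Real.sqrt (1 / (r₁ * r₂) + 1 / (r₂ * r₃) + 1 / (r₃ * r₁)) with hs_def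
  have hs0 : 0 ≤ s := Real.sqrt_nonneg _
  have hs2 : s^2 = 1 / (r₁ * r₂) + 1 / (r₂ * r₃) + 1 / (r₃ * r₁) := by
    rw [hs_def]; exact Real.sq_sqrt (by positivity)
  have hsq : (2*r*(r₁*r₂*r₃)*s)^2 = 4*(r₁*r₂*r₃)*(r₁+r₂+r₃)*r^2 := by
    rw [mul_pow, hs2]
    field_simp
    ring
  have hfac : ((r₁*r₂*r₃ - (r₁*r₂ + r₂*r₃ + r₃*r₁)*r) - 2*r*(r₁*r₂*r₃)*s)
      * ((r₁*r₂*r₃ - (r₁*r₂ + r₂*r₃ + r₃*r₁)*r) + 2*r*(r₁*r₂*r₃)*s) = 0 := by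
    linear_combination hQ - hsq
  have hMt : r₁*r₂*r₃ - (r₁*r₂ + r₂*r₃ + r₃*r₁)*r = 2*r*(r₁*r₂*r₃)*s := by
    rcases mul_eq_zero.mp hfac with h | h
    · linarith
    · have hrs : 0 ≤ 2*r*(r₁*r₂*r₃)*s := by positivity
      linarith
  have hrne : r ≠ 0 := hr.ne'
  have h₁ne : r₁ ≠ 0 := hr₁.ne'
  have h₂ne : r₂ ≠ 0 := hr₂.ne'
  have h₃ne : r₃ ≠ 0 := hr₃.ne'
  field_simp
  linear_combination hMt
end

section
/- Every tree has a balanced circle-contact representation: let V be a nonempty finite type with n = card V, and let G be a simple graph on V that is a tree (connected and acyclic). Then there exist maps c : V → ℝ² and r : V → ℝ with r v > 0 for all v, such that for all distinct u, v ∈ V one has dist(c u, c v) ≥ r u + r v with equality if and only if u and v are adjacent in G, and moreover r u ≤ 2·n·r v for all u, v ∈ V. -/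
namespace TreeBalanced

open Finset

variable {V : Type} [Fintype V] [DecidableEq V]

/-- Ancestor relation: `v` is an ancestor of `u` (including `u` itself). -/
def anc (par : V → V) (u v : V) : Prop := ∃ k, par^[k] u = v

/-- Specification of a rooted-tree parent structure. -/
structure Spec (par : V → V) (t : V) (depth : V → ℕ) : Prop where
  hpt : par t = t
  hd0 : ∀ v, depth v = 0 ↔ v = t
  hdp : ∀ v, v ≠ t → depth (par v) + 1 = depth v

namespace Spec

variable {par : V → V} {t : V} {depth : V → ℕ} (hs : Spec par t depth)

set_option linter.unusedSectionVars false

include hs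

theorem depth_iter_le {k : ℕ} : ∀ {v : V}, k ≤ depth v → depth (par^[k] v) + k = depth v := by
  induction k with
  | zero => intro v _; simp
  | succ k ih =>
    intro v hk
    have h1 : k ≤ depth v := Nat.le_of_succ_le hk
    have h2 := ih h1
    have hne : par^[k] v ≠ t := by
      intro h
      rw [h] at h2
      have := (hs.hd0 t).mpr rfl
      omega
    rw [Function.iterate_succ_apply' par k v]
    have := hs.hdp _ hne
    omega

theorem iter_eq_t {k : ℕ} {v : V} (hk : depth v ≤ k) : par^[k] v = t := by
  have h1 : par^[depth v] v = t := by
    by_contra h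
    have := hs.hdp _ h
    have h2 := hs.depth_iter_le (le_refl (depth v)) (v := v)
    have h3 : depth (par^[depth v] v) = 0 := by omega
    exact h ((hs.hd0 _).mp h3)
  calc par^[k] v = par^[k - depth v] (par^[depth v] v) := by
        rw [← Function.iterate_add_apply]; congr 1; omega
    _ = t := by rw [h1]; exact Function.iterate_fixed hs.hpt _

theorem anc_refl (v : V) : anc par v v := ⟨0, rfl⟩

theorem anc_t (v : V) : anc par v t := ⟨depth v, hs.iter_eq_t le_rfl⟩

theorem anc_canon {u v : V} (h : anc par u v) :
    par^[depth u - depth v] u = v ∧ depth v ≤ depth u := by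
  obtain ⟨k, hk⟩ := h
  rcases le_or_gt k (depth u) with hle | hlt
  · have := hs.depth_iter_le hle (v := u)
    rw [hk] at this
    constructor
    · have : depth u - depth v = k := by omega
      rw [this, hk]
    · omega
  · have hvt : v = t := by rw [← hk]; exact hs.iter_eq_t (le_of_lt hlt)
    have hdt : depth v = 0 := by rw [hvt]; exact (hs.hd0 t).mpr rfl
    refine ⟨?_, by omega⟩
    rw [hdt, Nat.sub_zero, hvt]
    exact hs.iter_eq_t le_rfl

theorem anc_trans {u v w : V} (h1 : anc par u v) (h2 : anc par v w) : anc par u w := by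
  obtain ⟨k, hk⟩ := h1; obtain ⟨l, hl⟩ := h2
  exact ⟨l + k, by rw [Function.iterate_add_apply, hk, hl]⟩

theorem anc_depth_le {u v : V} (h : anc par u v) : depth v ≤ depth u := (hs.anc_canon h).2

theorem anc_eq_of_depth_eq {u v : V} (h : anc par u v) (hd : depth u = depth v) : u = v := by
  have := (hs.anc_canon h).1
  rw [hd, Nat.sub_self] at this
  exact this.symm ▸ rfl

theorem anc_depth_lt {u v : V} (h : anc par u v) (hne : u ≠ v) : depth v < depth u := by
  rcases lt_or_eq_of_le (hs.anc_depth_le h) with h' | h'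
  · exact h'
  · exact absurd (hs.anc_eq_of_depth_eq h h'.symm) hne

theorem anc_antisymm {u v : V} (h1 : anc par u v) (h2 : anc par v u) : u = v :=
  hs.anc_eq_of_depth_eq h1 (le_antisymm (hs.anc_depth_le h2) (hs.anc_depth_le h1))

theorem anc_unique_depth {u a b : V} (ha : anc par u a) (hb : anc par u b)
    (hd : depth a = depth b) : a = b := by
  have h1 := (hs.anc_canon ha).1
  have h2 := (hs.anc_canon hb).1
  rw [← h1, ← h2, hd]

/-- Every strict descendant factors through a child. -/
theorem anc_child {u v : V} (h : anc par u v) (hne : u ≠ v) :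
    ∃ c, par c = v ∧ c ≠ t ∧ anc par u c ∧ depth c = depth v + 1 := by
  have hlt := hs.anc_depth_lt h hne
  set k := depth u - depth v with hk
  have hk1 : 1 ≤ k := by omega
  have hcan := (hs.anc_canon h).1
  refine ⟨par^[k-1] u, ?_, ?_, ⟨k - 1, rfl⟩, ?_⟩
  · rw [← Function.iterate_succ_apply' par (k-1) u]
    have hk2 : k - 1 + 1 = k := by omega
    rw [Nat.succ_eq_add_one, hk2, hcan]
  · intro hteq
    have := hs.depth_iter_le (k := k - 1) (v := u) (by omega)
    rw [hteq, (hs.hd0 t).mpr rfl] at this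
    omega
  · have := hs.depth_iter_le (k := k - 1) (v := u) (by omega)
    omega

theorem anc_par {u v : V} (h : anc par u v) (hne : u ≠ v) : u ≠ t ∧ anc par (par u) v := by
  have hlt := hs.anc_depth_lt h hne
  have hut : u ≠ t := by
    intro h'
    have : depth u = 0 := by rw [h']; exact (hs.hd0 t).mpr rfl
    omega
  refine ⟨hut, ?_⟩
  have hcan := (hs.anc_canon h).1
  set k := depth u - depth v with hk
  have hk1 : 1 ≤ k := by omega
  refine ⟨k - 1, ?_⟩
  rw [← Function.iterate_succ_apply par (k-1) u]
  have hk2 : k - 1 + 1 = k := by omega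
  rw [Nat.succ_eq_add_one, hk2, hcan]


end Spec

open scoped Classical in
/-- The subtree (set of descendants, including itself) of a vertex. -/
noncomputable def sub (par : V → V) (v : V) : Finset V := univ.filter fun u => anc par u v

noncomputable def wgt (par : V → V) (v : V) : ℕ := (sub par v).card

/-- The children of a vertex. -/
def children (par : V → V) (t v : V) : Finset V := univ.filter fun c => par c = v ∧ c ≠ t

theorem mem_sub {par : V → V} {u v : V} : u ∈ sub par v ↔ anc par u v := by
  classical
  simp [sub]

theorem mem_children {par : V → V} {t v c : V} :
    c ∈ children par t v ↔ par c = v ∧ c ≠ t := by simp [children]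

namespace Spec

variable {par : V → V} {t : V} {depth : V → ℕ} (hs : Spec par t depth)

set_option linter.unusedSectionVars false

include hs

theorem wgt_pos (v : V) : 1 ≤ wgt par v := by
  rw [wgt, Nat.one_le_iff_ne_zero, ← Nat.pos_iff_ne_zero, Finset.card_pos]
  exact ⟨v, mem_sub.mpr (hs.anc_refl v)⟩

theorem wgt_le (v : V) : wgt par v ≤ Fintype.card V := by
  rw [wgt, ← Finset.card_univ]
  exact Finset.card_le_card (Finset.subset_univ _)

theorem wgt_t : wgt par t = Fintype.card V := by
  rw [wgt, ← Finset.card_univ]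
  congr 1
  apply Finset.eq_univ_of_forall
  intro u
  exact mem_sub.mpr (hs.anc_t u)

theorem sub_subset_of_anc {c v : V} (h : anc par c v) : sub par c ⊆ sub par v := by
  intro u hu
  exact mem_sub.mpr (hs.anc_trans (mem_sub.mp hu) h)

theorem wgt_succ_le {g c : V} (h : anc par g c) (hne : g ≠ c) :
    wgt par g + 1 ≤ wgt par c := by
  have hsubset : sub par g ⊆ (sub par c).erase c := by
    intro u hu
    rw [Finset.mem_erase]
    have hanc := mem_sub.mp hu
    refine ⟨?_, mem_sub.mpr (hs.anc_trans hanc h)⟩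
    intro heq
    subst heq
    exact hne (hs.anc_antisymm h hanc)
  have h1 : (sub par g).card ≤ ((sub par c).erase c).card := Finset.card_le_card hsubset
  have h2 : ((sub par c).erase c).card = (sub par c).card - 1 :=
    Finset.card_erase_of_mem (mem_sub.mpr (hs.anc_refl c))
  have h3 := hs.wgt_pos c
  simp only [wgt] at h3 ⊢
  omega

theorem child_depth {c v : V} (h1 : par c = v) (h2 : c ≠ t) : depth c = depth v + 1 := by
  have h3 := hs.hdp c h2
  rw [h1] at h3
  omega

theorem child_ne {c v : V} (h1 : par c = v) (h2 : c ≠ t) : c ≠ v := by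
  intro h
  have h4 := hs.child_depth h1 h2
  rw [h] at h4
  omega

omit hs in
theorem child_anc {c v : V} (h1 : par c = v) : anc par c v := ⟨1, by simp [h1]⟩

theorem sub_eq (v : V) :
    sub par v = insert v ((children par t v).biUnion (fun c => sub par c)) := by
  ext u
  simp only [Finset.mem_insert, Finset.mem_biUnion, mem_sub, mem_children]
  constructor
  · intro h
    by_cases hu : u = v
    · exact Or.inl hu
    · obtain ⟨c, hc1, hc2, hc3, _⟩ := hs.anc_child h hu
      exact Or.inr ⟨c, ⟨hc1, hc2⟩, hc3⟩
  · rintro (rfl | ⟨c, ⟨hc1, _⟩, hc3⟩)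
    · exact hs.anc_refl u
    · exact hs.anc_trans hc3 (child_anc hc1)

theorem children_disj {c c' : V} {v : V} (hc : c ∈ children par t v)
    (hc' : c' ∈ children par t v) (hne : c ≠ c') :
    Disjoint (sub par c) (sub par c') := by
  rw [mem_children] at hc hc'
  rw [Finset.disjoint_left]
  intro u hu hu'
  exact hne (hs.anc_unique_depth (mem_sub.mp hu) (mem_sub.mp hu')
    (by rw [hs.child_depth hc.1 hc.2, hs.child_depth hc'.1 hc'.2]))

theorem not_mem_biUnion (v : V) :
    v ∉ (children par t v).biUnion (fun c => sub par c) := by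
  intro h
  rw [Finset.mem_biUnion] at h
  obtain ⟨c, hc, hmem⟩ := h
  rw [mem_children] at hc
  have hanc : anc par v c := mem_sub.mp hmem
  have heq : c = v := hs.anc_antisymm (child_anc hc.1) hanc
  exact (hs.child_ne hc.1 hc.2) heq

theorem wgt_eq (v : V) : wgt par v = 1 + ∑ c ∈ children par t v, wgt par c := by
  have h1 : wgt par v = (insert v ((children par t v).biUnion (fun c => sub par c))).card := by
    rw [wgt, hs.sub_eq v]
  rw [h1, Finset.card_insert_of_notMem (hs.not_mem_biUnion v),
    Finset.card_biUnion (fun c hc c' hc' hne => hs.children_disj hc hc' hne)]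
  rw [Nat.add_comm]
  rfl


end Spec

section Layout

variable (par : V → V) (t : V) (depth : V → ℕ) (rk : V → ℕ)

/-- The gap used between sibling slots below `v`. -/
noncomputable def gp (v : V) : ℝ := 2 / ((children par t v).card + 1)

/-- The elder siblings of `c` (children of `par c` of smaller rank). -/
def elders (c : V) : Finset V := (children par t (par c)).filter (fun c' => rk c' < rk c)

/-- Offset of the slot of `c` inside the slot of its parent. -/
noncomputable def off (c : V) : ℝ :=
  (∑ c' ∈ elders par t rk c, 2 * (wgt par c' : ℝ))
    + ((elders par t rk c).card + 1) * gp par t (par c)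

/-- Left endpoint of the slot of `v` (slot has length `2 * wgt v`). -/
noncomputable def aa (v : V) : ℝ := ∑ k ∈ Finset.range (depth v), off par t rk (par^[k] v)

/-- The x-coordinate of the center of the circle of `v`. -/
noncomputable def xx (v : V) : ℝ := aa par t depth rk v + (wgt par v : ℝ)

/-- The vertical descent from `par c` to `c`. -/
noncomputable def dsc (c : V) : ℝ :=
  Real.sqrt (((wgt par (par c) : ℝ) + (wgt par c : ℝ))^2
    - (xx par t depth rk c - xx par t depth rk (par c))^2)

/-- The y-coordinate of the center of the circle of `v`. -/
noncomputable def yy (v : V) : ℝ := - ∑ k ∈ Finset.range (depth v), dsc par t depth rk (par^[k] v)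

theorem gp_pos (v : V) : 0 < gp par t v := by
  apply div_pos (by norm_num)
  positivity

theorem gp_le_one {v c : V} (hc : c ∈ children par t v) : gp par t v ≤ 1 := by
  rw [gp, div_le_one (by positivity)]
  have : 1 ≤ (children par t v).card := Finset.card_pos.mpr ⟨c, hc⟩
  have : (1 : ℝ) ≤ ((children par t v).card : ℝ) := by exact_mod_cast this
  linarith

theorem card_gp (v : V) :
    ((children par t v).card : ℝ) * gp par t v + gp par t v = 2 := by
  rw [gp]
  field_simp

theorem dsc_nonneg (c : V) : 0 ≤ dsc par t depth rk c := Real.sqrt_nonneg _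

end Layout

namespace Spec

variable {par : V → V} {t : V} {depth : V → ℕ} (rk : V → ℕ) {hsrk : Function.Injective rk}
variable (hs : Spec par t depth)

set_option linter.unusedSectionVars false

include hs

theorem sum_children_wgt (v : V) :
    (∑ c ∈ children par t v, 2 * (wgt par c : ℝ)) = 2 * (wgt par v : ℝ) - 2 := by
  have h := hs.wgt_eq v
  have : ((wgt par v : ℝ)) = 1 + ∑ c ∈ children par t v, (wgt par c : ℝ) := by
    exact_mod_cast congrArg (Nat.cast : ℕ → ℝ) h
  rw [← Finset.mul_sum]
  linarith

theorem off_lb {c : V} (hc : c ≠ t) : gp par t (par c) ≤ off par t rk c := by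
  have h1 : 0 ≤ ∑ c' ∈ elders par t rk c, 2 * (wgt par c' : ℝ) :=
    Finset.sum_nonneg (fun c' _ => by positivity)
  have h2 : 0 < gp par t (par c) := gp_pos par t (par c)
  have h3 : (0 : ℝ) ≤ ((elders par t rk c).card : ℝ) := Nat.cast_nonneg _
  rw [off]
  nlinarith

theorem off_ub {c : V} (hc : c ≠ t) :
    off par t rk c + 2 * (wgt par c : ℝ) ≤ 2 * (wgt par (par c) : ℝ) - gp par t (par c) := by
  set v := par c with hv
  have hcc : c ∈ children par t v := mem_children.mpr ⟨rfl, hc⟩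
  have hcns : c ∉ elders par t rk c := by
    rw [elders, Finset.mem_filter]
    rintro ⟨-, h⟩
    exact lt_irrefl _ h
  have hsubset : insert c (elders par t rk c) ⊆ children par t v := by
    intro z hz
    rcases Finset.mem_insert.mp hz with rfl | hz'
    · exact hcc
    · exact Finset.mem_of_mem_filter z hz'
  have hsum : (∑ c' ∈ elders par t rk c, 2 * (wgt par c' : ℝ)) + 2 * (wgt par c : ℝ)
      ≤ ∑ c' ∈ children par t v, 2 * (wgt par c' : ℝ) := by
    have := Finset.sum_le_sum_of_subset_of_nonneg hsubset
      (fun z _ _ => by positivity : ∀ z ∈ children par t v, z ∉ insert c (elders par t rk c) → 0 ≤ 2 * (wgt par z : ℝ))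
    rw [Finset.sum_insert hcns] at this
    linarith
  have hcard : ((elders par t rk c).card + 1 : ℝ) ≤ ((children par t v).card : ℝ) := by
    have := Finset.card_le_card hsubset
    rw [Finset.card_insert_of_notMem hcns] at this
    exact_mod_cast this
  have hgp := gp_pos par t v
  have hkey := card_gp par t v
  have hsw := hs.sum_children_wgt v
  rw [off]
  nlinarith [mul_le_mul_of_nonneg_right hcard (le_of_lt hgp)]

theorem off_sep {c c' : V} (hc : c ≠ t) (hc' : c' ≠ t) (hpar : par c = par c')
    (hlt : rk c < rk c') :
    off par t rk c + 2 * (wgt par c : ℝ) + gp par t (par c) ≤ off par t rk c' := by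
  have hcc : c ∈ children par t (par c') := mem_children.mpr ⟨hpar, hc⟩
  have hcns : c ∉ elders par t rk c := by
    rw [elders, Finset.mem_filter]
    rintro ⟨-, h⟩
    exact lt_irrefl _ h
  have hsubset : insert c (elders par t rk c) ⊆ elders par t rk c' := by
    intro z hz
    rw [elders, Finset.mem_filter]
    rcases Finset.mem_insert.mp hz with rfl | hz'
    · exact ⟨hcc, hlt⟩
    · rw [elders, Finset.mem_filter, hpar] at hz'
      exact ⟨hz'.1, lt_trans hz'.2 hlt⟩
  have hsum : (∑ z ∈ elders par t rk c, 2 * (wgt par z : ℝ)) + 2 * (wgt par c : ℝ)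
      ≤ ∑ z ∈ elders par t rk c', 2 * (wgt par z : ℝ) := by
    have := Finset.sum_le_sum_of_subset_of_nonneg hsubset
      (fun z _ _ => by positivity : ∀ z ∈ elders par t rk c', z ∉ insert c (elders par t rk c) → 0 ≤ 2 * (wgt par z : ℝ))
    rw [Finset.sum_insert hcns] at this
    linarith
  have hcard : ((elders par t rk c).card + 1 : ℝ) ≤ ((elders par t rk c').card : ℝ) := by
    have := Finset.card_le_card hsubset
    rw [Finset.card_insert_of_notMem hcns] at this
    exact_mod_cast this
  have hgp := gp_pos par t (par c)
  rw [off, off, hpar]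
  rw [hpar] at hgp
  nlinarith [mul_le_mul_of_nonneg_right hcard (le_of_lt hgp)]

theorem aa_rec {v : V} (hv : v ≠ t) :
    aa par t depth rk v = off par t rk v + aa par t depth rk (par v) := by
  have hd : depth v = depth (par v) + 1 := by have := hs.hdp v hv; omega
  rw [aa, aa, hd, Finset.sum_range_succ']
  simp only [Function.iterate_succ_apply, Function.iterate_zero_apply]
  ring

theorem yy_rec {v : V} (hv : v ≠ t) :
    yy par t depth rk v = yy par t depth rk (par v) - dsc par t depth rk v := by
  have hd : depth v = depth (par v) + 1 := by have := hs.hdp v hv; omega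
  rw [yy, yy, hd, Finset.sum_range_succ']
  simp only [Function.iterate_succ_apply, Function.iterate_zero_apply]
  ring

/-- Laminar slot nesting. -/
theorem laminar {g v : V} (h : anc par g v) :
    aa par t depth rk v ≤ aa par t depth rk g ∧
      aa par t depth rk g + 2 * (wgt par g : ℝ) ≤ aa par t depth rk v + 2 * (wgt par v : ℝ) := by
  obtain ⟨k, hk⟩ := h
  induction k generalizing g with
  | zero => simp at hk; subst hk; exact ⟨le_refl _, le_refl _⟩
  | succ k ih =>
    by_cases hgv : g = v
    · subst hgv; exact ⟨le_refl _, le_refl _⟩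
    · have hgt : g ≠ t := by
        intro h'
        subst h'
        rw [Function.iterate_fixed hs.hpt] at hk
        exact hgv hk
      have hk' : par^[k] (par g) = v := by
        rw [← Function.iterate_succ_apply]
        exact hk
      have hih := ih hk'
      have h1 := hs.off_lb rk (c := g) hgt
      have h2 := hs.off_ub rk (c := g) hgt
      have h3 := hs.aa_rec rk (v := g) hgt
      have hgp := gp_pos par t (par g)
      constructor
      · linarith [hih.1]
      · linarith [hih.2]

theorem yy_anc_le {g v : V} (h : anc par g v) :
    yy par t depth rk g ≤ yy par t depth rk v := by
  obtain ⟨k, hk⟩ := h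
  induction k generalizing g with
  | zero => simp at hk; subst hk; exact le_refl _
  | succ k ih =>
    by_cases hgv : g = v
    · subst hgv; exact le_refl _
    · have hgt : g ≠ t := by
        intro h'
        subst h'
        rw [Function.iterate_fixed hs.hpt] at hk
        exact hgv hk
      have hk' : par^[k] (par g) = v := by
        rw [← Function.iterate_succ_apply]
        exact hk
      have hih := ih hk'
      have h3 := hs.yy_rec rk (v := g) hgt
      have h4 := dsc_nonneg par t depth rk g
      linarith

/-- Bounds on the horizontal displacement of a child from its parent. -/
theorem child_dx {c : V} (hc : c ≠ t) :
    (wgt par c : ℝ) - (wgt par (par c) : ℝ) ≤ xx par t depth rk c - xx par t depth rk (par c) ∧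
      xx par t depth rk c - xx par t depth rk (par c) ≤ (wgt par (par c) : ℝ) - (wgt par c : ℝ) := by
  have h1 := hs.off_lb rk (c := c) hc
  have h2 := hs.off_ub rk (c := c) hc
  have h3 := hs.aa_rec rk (v := c) hc
  have hgp := gp_pos par t (par c)
  rw [xx, xx]
  constructor <;> nlinarith

theorem dsc_sq {c : V} (hc : c ≠ t) :
    (dsc par t depth rk c)^2 = ((wgt par (par c) : ℝ) + (wgt par c : ℝ))^2
      - (xx par t depth rk c - xx par t depth rk (par c))^2 := by
  rw [dsc]
  apply Real.sq_sqrt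
  have hdx := hs.child_dx rk (c := c) hc
  nlinarith [hdx.1, hdx.2]

end Spec

section Geometry

/-- A point of the Euclidean plane. -/
noncomputable def pt (a b : ℝ) : EuclideanSpace ℝ (Fin 2) := !₂[a, b]

theorem dist_pt (a b a' b' : ℝ) :
    dist (pt a b) (pt a' b') = Real.sqrt ((a - a')^2 + (b - b')^2) := by
  rw [EuclideanSpace.dist_eq, Fin.sum_univ_two]
  simp [pt, Real.dist_eq, sq_abs]

theorem dist_pt_eq {a b a' b' s : ℝ} (h : (a - a')^2 + (b - b')^2 = s^2) (hs : 0 ≤ s) :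
    dist (pt a b) (pt a' b') = s := by
  rw [dist_pt, h, Real.sqrt_sq hs]

theorem dist_pt_gt {a b a' b' s : ℝ} (h : s^2 < (a - a')^2 + (b - b')^2) (hs : 0 ≤ s) :
    s < dist (pt a b) (pt a' b') := by
  rw [dist_pt]
  exact (Real.lt_sqrt hs).mpr h

theorem dist_pt_ge_horiz (a b a' b' : ℝ) : a' - a ≤ dist (pt a b) (pt a' b') := by
  rw [dist_pt]
  have h1 : a' - a ≤ |a - a'| := by
    rw [abs_sub_comm]
    exact le_abs_self _
  refine le_trans h1 ?_
  rw [← Real.sqrt_sq_eq_abs]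
  apply Real.sqrt_le_sqrt
  nlinarith [sq_nonneg (b - b')]

/-- The key separation inequality between an ancestor and a non-child descendant. -/
theorem key_ineq {A B G dx tt D f : ℝ} (hG : 1 ≤ G) (hB : G + 1 ≤ B) (hA : B + 1 ≤ A)
    (hdx1 : dx ≤ A - B) (hdx2 : -(A - B) ≤ dx)
    (htt1 : tt ≤ B - G) (htt2 : -(B - G) ≤ tt)
    (hD : 0 ≤ D) (hDsq : D^2 = (A + B)^2 - dx^2) (hf : 0 ≤ f) :
    (A + G)^2 < (dx + tt)^2 + (D + f)^2 := by
  have hDf : D^2 ≤ (D + f)^2 := by nlinarith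
  have hE : (0:ℝ) < B - G := by linarith
  rcases le_or_gt (dx^2) ((B - G)^2) with hcase | hcase
  · nlinarith [sq_nonneg (dx + tt)]
  · rcases le_or_gt 0 dx with hdx0 | hdx0
    · have h1 : B - G < dx := by nlinarith
      have h2 : (dx - (B - G))^2 ≤ (dx + tt)^2 := by nlinarith
      nlinarith
    · have h1 : dx < -(B - G) := by nlinarith
      have h2 : (dx + (B - G))^2 ≤ (dx + tt)^2 := by nlinarith
      nlinarith

end Geometry

/-- Center of the circle of a vertex. -/
noncomputable def cpt (par : V → V) (t : V) (depth : V → ℕ) (rk : V → ℕ) (v : V) :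
    EuclideanSpace ℝ (Fin 2) :=
  pt (xx par t depth rk v) (yy par t depth rk v)

namespace Spec

variable {par : V → V} {t : V} {depth : V → ℕ} (rk : V → ℕ)
variable (hs : Spec par t depth)

set_option linter.unusedSectionVars false

include hs

/-- Tangency along an edge. -/
theorem dist_edge {g : V} (hgt : g ≠ t) :
    dist (cpt par t depth rk (par g)) (cpt par t depth rk g)
      = (wgt par (par g) : ℝ) + (wgt par g : ℝ) := by
  have h1 := hs.yy_rec rk (v := g) hgt
  have h2 := hs.dsc_sq rk (c := g) hgt
  have h3 : (0:ℝ) ≤ (wgt par (par g) : ℝ) + (wgt par g : ℝ) := by positivity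
  apply dist_pt_eq _ h3
  have h4 : yy par t depth rk (par g) - yy par t depth rk g = dsc par t depth rk g := by
    linarith
  rw [h4]
  nlinarith [h2]

/-- Strict separation between an ancestor and a strictly deeper descendant. -/
theorem dist_anc {u c g : V} (hc : par c = u) (hct : c ≠ t) (hanc : anc par g c)
    (hne : g ≠ c) :
    (wgt par u : ℝ) + (wgt par g : ℝ) < dist (cpt par t depth rk u) (cpt par t depth rk g) := by
  set A := (wgt par u : ℝ) with hA'
  set B := (wgt par c : ℝ) with hB'
  set Gg := (wgt par g : ℝ) with hG'
  have hG : (1:ℝ) ≤ Gg := by rw [hG']; exact_mod_cast hs.wgt_pos g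
  have hBnat := hs.wgt_succ_le hanc hne
  have hB : Gg + 1 ≤ B := by rw [hG', hB']; exact_mod_cast hBnat
  have hAnat := hs.wgt_succ_le (child_anc hc) (hs.child_ne hc hct)
  have hA : B + 1 ≤ A := by
    rw [hA', hB']
    exact_mod_cast hAnat
  -- horizontal displacements
  have hdx := hs.child_dx rk (c := c) hct
  rw [hc] at hdx
  set dx := xx par t depth rk c - xx par t depth rk u with hdx'
  have hlam := hs.laminar rk (g := g) (v := c) hanc
  set tt := xx par t depth rk g - xx par t depth rk c with htt'
  have htt1 : tt ≤ B - Gg := by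
    rw [htt', xx, xx]
    have := hlam.2
    push_cast
    push_cast at this
    linarith
  have htt2 : -(B - Gg) ≤ tt := by
    rw [htt', xx, xx]
    have := hlam.1
    push_cast
    push_cast at this
    linarith
  -- vertical
  have hD := dsc_nonneg par t depth rk c
  have hDsq := hs.dsc_sq rk (c := c) hct
  rw [hc] at hDsq
  set D := dsc par t depth rk c with hD'
  have hyc := hs.yy_rec rk (v := c) hct
  rw [hc] at hyc
  set f := yy par t depth rk c - yy par t depth rk g with hf'
  have hf : 0 ≤ f := by
    rw [hf']
    have := hs.yy_anc_le rk (g := g) (v := c) hanc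
    linarith
  have hkey := key_ineq hG hB hA hdx.2 (by linarith [hdx.1]) htt1 htt2 hD hDsq hf
  apply dist_pt_gt _ (by positivity)
  have e1 : xx par t depth rk u - xx par t depth rk g = -(dx + tt) := by
    rw [hdx', htt']; ring
  have e2 : yy par t depth rk u - yy par t depth rk g = D + f := by
    rw [hf']
    have : yy par t depth rk u = yy par t depth rk c + D := by rw [hD']; linarith
    linarith
  rw [e1, e2]
  calc (A + Gg)^2 < (dx + tt)^2 + (D + f)^2 := hkey
    _ = (-(dx + tt))^2 + (D + f)^2 := by ring

/-- Strict separation between vertices of different branches. -/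
theorem dist_split {u v j cu cv : V} (hcu : par cu = j) (hcut : cu ≠ t)
    (hcv : par cv = j) (hcvt : cv ≠ t) (hrkuv : rk cu < rk cv)
    (hu : anc par u cu) (hv : anc par v cv) :
    (wgt par u : ℝ) + (wgt par v : ℝ) < dist (cpt par t depth rk u) (cpt par t depth rk v) := by
  have hsep := hs.off_sep rk hcut hcvt (hcu.trans hcv.symm) hrkuv
  rw [hcu] at hsep
  have hrecu := hs.aa_rec rk (v := cu) hcut
  have hrecv := hs.aa_rec rk (v := cv) hcvt
  rw [hcu] at hrecu
  rw [hcv] at hrecv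
  have hlamu := (hs.laminar rk (g := u) (v := cu) hu).2
  have hlamv := (hs.laminar rk (g := v) (v := cv) hv).1
  have hgp := gp_pos par t j
  have hwu : (1:ℝ) ≤ (wgt par u : ℝ) := by exact_mod_cast hs.wgt_pos u
  have hwv : (1:ℝ) ≤ (wgt par v : ℝ) := by exact_mod_cast hs.wgt_pos v
  have hkey : xx par t depth rk u + (wgt par u : ℝ) + (wgt par v : ℝ)
      < xx par t depth rk v := by
    rw [xx, xx]
    linarith
  calc (wgt par u : ℝ) + (wgt par v : ℝ)
      < xx par t depth rk v - xx par t depth rk u := by linarith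
    _ ≤ dist (cpt par t depth rk u) (cpt par t depth rk v) := dist_pt_ge_horiz _ _ _ _

/-- Ancestry trichotomy. -/
theorem trichotomy {u v : V} (hne : u ≠ v) :
    anc par u v ∨ anc par v u ∨
      ∃ j cu cv, par cu = j ∧ cu ≠ t ∧ par cv = j ∧ cv ≠ t ∧ cu ≠ cv ∧
        anc par u cu ∧ anc par v cv := by
  have main : ∀ n, ∀ u v : V, depth u + depth v ≤ n → u ≠ v →
      anc par u v ∨ anc par v u ∨
      ∃ j cu cv, par cu = j ∧ cu ≠ t ∧ par cv = j ∧ cv ≠ t ∧ cu ≠ cv ∧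
        anc par u cu ∧ anc par v cv := by
    intro n
    induction n with
    | zero =>
      intro u v hb hne'
      have hu : depth u = 0 := by omega
      have hv : depth v = 0 := by omega
      exact absurd (((hs.hd0 u).mp hu).trans ((hs.hd0 v).mp hv).symm) hne'
    | succ n ih =>
      intro u v hb hne'
      by_cases hut : u = t
      · subst hut; exact Or.inr (Or.inl (hs.anc_t v))
      by_cases hvt : v = t
      · subst hvt; exact Or.inl (hs.anc_t u)
      rcases le_total (depth v) (depth u) with hord | hord
      · -- recurse on (par u, v)
        by_cases hp : par u = v
        · exact Or.inl (child_anc hp)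
        have hdu : depth (par u) + 1 = depth u := hs.hdp u hut
        have hb' : depth (par u) + depth v ≤ n := by omega
        by_cases hpv : par u = v
        · exact Or.inl (child_anc hpv)
        rcases ih (par u) v hb' (fun h => hp h) with h1 | h2 | h3
        · exact Or.inl (hs.anc_trans ⟨1, by simp⟩ h1)
        · -- v is a strict descendant of par u
          have hvne : v ≠ par u := fun h => hp h.symm
          obtain ⟨c, hc1, hc2, hc3, _⟩ := hs.anc_child h2 hvne
          by_cases hcu : c = u
          · subst hcu; exact Or.inr (Or.inl hc3)
          · exact Or.inr (Or.inr ⟨par u, u, c, rfl, hut, hc1, hc2, fun h => hcu h.symm,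
              hs.anc_refl u, hc3⟩)
        · obtain ⟨j, a, b, ha1, ha2, hb1, hb2, hab, hua, hvb⟩ := h3
          exact Or.inr (Or.inr ⟨j, a, b, ha1, ha2, hb1, hb2, hab,
            hs.anc_trans ⟨1, by simp⟩ hua, hvb⟩)
      · -- symmetric: recurse on (u, par v)
        by_cases hp : par v = u
        · exact Or.inr (Or.inl (child_anc hp))
        have hdv : depth (par v) + 1 = depth v := hs.hdp v hvt
        have hb' : depth u + depth (par v) ≤ n := by omega
        rcases ih u (par v) hb' (fun h => hp h.symm) with h1 | h2 | h3
        · -- u strict descendant of par v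
          have hune : u ≠ par v := fun h => hp h.symm
          obtain ⟨c, hc1, hc2, hc3, _⟩ := hs.anc_child h1 hune
          by_cases hcv' : c = v
          · subst hcv'; exact Or.inl hc3
          · exact Or.inr (Or.inr ⟨par v, c, v, hc1, hc2, rfl, hvt, hcv',
              hc3, hs.anc_refl v⟩)
        · exact Or.inr (Or.inl (hs.anc_trans ⟨1, by simp⟩ h2))
        · obtain ⟨j, a, b, ha1, ha2, hb1, hb2, hab, hua, hvb⟩ := h3
          exact Or.inr (Or.inr ⟨j, a, b, ha1, ha2, hb1, hb2, hab, hua,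
            hs.anc_trans ⟨1, by simp⟩ hvb⟩)
  exact main (depth u + depth v) u v le_rfl hne

end Spec


namespace Spec

variable {par : V → V} {t : V} {depth : V → ℕ} (rk : V → ℕ)
variable (hs : Spec par t depth)

set_option linter.unusedSectionVars false

include hs

theorem anc_t_eq {c : V} (h : anc par t c) : c = t := by
  obtain ⟨k, hk⟩ := h
  rw [Function.iterate_fixed hs.hpt] at hk
  exact hk.symm

/-- In the strict ancestor configuration, `u` and `g` are not adjacent. -/
theorem not_adj_anc {u c g : V} (G : SimpleGraph V)
    (hadj2 : ∀ a b, G.Adj a b → par a = b ∨ par b = a)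
    (hc : par c = u) (hct : c ≠ t) (hanc : anc par g c) (hne : g ≠ c) :
    ¬ G.Adj u g := by
  intro hadj
  have hgt : g ≠ t := by
    intro h
    subst h
    exact hct (hs.anc_t_eq hanc)
  have hdc : depth c = depth u + 1 := hs.child_depth hc hct
  have hdg : depth c < depth g := hs.anc_depth_lt hanc hne
  rcases hadj2 u g hadj with h | h
  · by_cases hut : u = t
    · subst hut
      rw [hs.hpt] at h
      subst h
      exact hct (hs.anc_t_eq hanc)
    · have := hs.hdp u hut
      rw [h] at this
      omega
  · have := hs.hdp g hgt
    rw [h] at this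
    omega

/-- In the split configuration, `u` and `v` are not adjacent. -/
theorem not_adj_split {u v j cu cv : V} (G : SimpleGraph V)
    (hadj2 : ∀ a b, G.Adj a b → par a = b ∨ par b = a)
    (hcu : par cu = j) (hcut : cu ≠ t) (hcv : par cv = j) (hcvt : cv ≠ t)
    (hne : cu ≠ cv) (hu : anc par u cu) (hv : anc par v cv) :
    ¬ G.Adj u v := by
  intro hadj
  have hd : depth cu = depth cv := by
    rw [hs.child_depth hcu hcut, hs.child_depth hcv hcvt]
  rcases hadj2 u v hadj with h | h
  · exact hne (hs.anc_unique_depth (hs.anc_trans (child_anc h) hv) hu hd.symm).symm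
  · exact hne (hs.anc_unique_depth (hs.anc_trans (child_anc h) hu) hv hd)

/-- The master pairwise statement. -/
theorem pair_main (hrk : Function.Injective rk) (G : SimpleGraph V)
    (hadj1 : ∀ g, g ≠ t → G.Adj g (par g))
    (hadj2 : ∀ a b, G.Adj a b → par a = b ∨ par b = a) :
    ∀ u v : V, u ≠ v →
      (wgt par u : ℝ) + (wgt par v : ℝ) ≤ dist (cpt par t depth rk u) (cpt par t depth rk v) ∧
      (dist (cpt par t depth rk u) (cpt par t depth rk v) = (wgt par u : ℝ) + (wgt par v : ℝ)
        ↔ G.Adj u v) := by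
  -- the adjacent (parent/child) case, for ordered pair (child u, parent v)
  have adj_case : ∀ u v : V, u ≠ v → par u = v →
      dist (cpt par t depth rk u) (cpt par t depth rk v)
        = (wgt par u : ℝ) + (wgt par v : ℝ) ∧ G.Adj u v := by
    intro u v hne hp
    have hut : u ≠ t := by
      intro h
      subst h
      rw [hs.hpt] at hp
      exact hne hp
    have hd := hs.dist_edge rk (g := u) hut
    rw [hp] at hd
    constructor
    · rw [dist_comm] at hd
      rw [hd]; ring
    · have := hadj1 u hut
      rwa [hp] at this
  -- the strict ancestor case, for ordered pair (ancestor u, descendant g)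
  have anc_case : ∀ u g : V, anc par g u → g ≠ u → par g ≠ u →
      (wgt par u : ℝ) + (wgt par g : ℝ)
        < dist (cpt par t depth rk u) (cpt par t depth rk g) ∧ ¬ G.Adj u g := by
    intro u g hanc hne hp
    obtain ⟨c, hc1, hc2, hc3, _⟩ := hs.anc_child hanc hne
    have hgc : g ≠ c := by
      intro h
      subst h
      exact hp hc1
    exact ⟨hs.dist_anc rk hc1 hc2 hc3 hgc, hs.not_adj_anc G hadj2 hc1 hc2 hc3 hgc⟩
  intro u v hne
  rcases hs.trichotomy (u := u) (v := v) hne with h | h | h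
  · -- v is an ancestor of u
    by_cases hp : par u = v
    · obtain ⟨heq, hadj⟩ := adj_case u v hne hp
      refine ⟨le_of_eq heq.symm, ?_⟩
      constructor
      · intro _; exact hadj
      · intro _; exact heq
    · obtain ⟨hlt, hnadj⟩ := anc_case v u h hne hp
      rw [dist_comm] at hlt
      have hlt' : (wgt par u : ℝ) + (wgt par v : ℝ)
          < dist (cpt par t depth rk u) (cpt par t depth rk v) := by
        rw [add_comm] at hlt; exact hlt
      refine ⟨le_of_lt hlt', ?_⟩
      constructor
      · intro heq
        rw [heq] at hlt'
        exact absurd rfl (ne_of_gt hlt')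
      · intro hadj
        exact absurd hadj.symm hnadj
  · -- u is an ancestor of v
    by_cases hp : par v = u
    · obtain ⟨heq, hadj⟩ := adj_case v u (Ne.symm hne) hp
      rw [dist_comm] at heq
      have heq' : dist (cpt par t depth rk u) (cpt par t depth rk v)
          = (wgt par u : ℝ) + (wgt par v : ℝ) := by
        rw [heq]; ring
      refine ⟨le_of_eq heq'.symm, ?_⟩
      constructor
      · intro _; exact hadj.symm
      · intro _; exact heq'
    · obtain ⟨hlt, hnadj⟩ := anc_case u v h (Ne.symm hne) hp
      refine ⟨le_of_lt hlt, ?_⟩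
      constructor
      · intro heq
        rw [heq] at hlt
        exact absurd rfl (ne_of_gt hlt)
      · intro hadj
        exact absurd hadj hnadj
  · obtain ⟨j, cu, cv, hcu1, hcu2, hcv1, hcv2, hcucv, hu, hv⟩ := h
    have hnadj := hs.not_adj_split G hadj2 hcu1 hcu2 hcv1 hcv2 hcucv hu hv
    have hlt : (wgt par u : ℝ) + (wgt par v : ℝ)
        < dist (cpt par t depth rk u) (cpt par t depth rk v) := by
      rcases lt_or_gt_of_ne (fun h' => hcucv (hrk h')) with hlt' | hlt'
      · exact hs.dist_split rk hcu1 hcu2 hcv1 hcv2 hlt' hu hv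
      · have := hs.dist_split rk hcv1 hcv2 hcu1 hcu2 hlt' hv hu
        rw [dist_comm] at this
        linarith
    refine ⟨le_of_lt hlt, ?_⟩
    constructor
    · intro heq
      rw [heq] at hlt
      exact absurd rfl (ne_of_gt hlt)
    · intro hadj
      exact absurd hadj hnadj

end Spec

section FromTree

open SimpleGraph

variable {V : Type} [Fintype V] [DecidableEq V] {G : SimpleGraph V}

theorem exists_spec (hG : G.IsTree) (t : V) :
    ∃ (par : V → V) (depth : V → ℕ), Spec par t depth ∧
      (∀ g, g ≠ t → G.Adj g (par g)) ∧ (∀ a b, G.Adj a b → par a = b ∨ par b = a) := by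
  have hp : ∀ v w : V, ∃ p : G.Walk v w, p.IsPath ∧ ∀ q : G.Walk v w, q.IsPath → q = p :=
    (SimpleGraph.isTree_iff_existsUnique_path.mp hG).2
  choose P hP1 hP2 using hp
  refine ⟨fun v => if h : v = t then t else (P v t).getVert 1, fun v => (P v t).length,
    ⟨?_, ?_, ?_⟩, ?_, ?_⟩
  · simp
  · intro v
    constructor
    · intro h
      exact SimpleGraph.Walk.eq_of_length_eq_zero h
    · intro h
      subst h
      have h0 : Walk.nil = P v v := hP2 v v Walk.nil Walk.IsPath.nil
      rw [← h0]
      rfl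
  · intro v hv
    obtain ⟨w, hadj, q, hq⟩ := Walk.exists_eq_cons_of_ne hv (P v t)
    have hpar : (if h : v = t then t else (P v t).getVert 1) = w := by
      rw [dif_neg hv, hq, Walk.getVert_cons_succ, Walk.getVert_zero]
    rw [hpar]
    have hqpath : q.IsPath := by
      have := hP1 v t
      rw [hq, Walk.cons_isPath_iff] at this
      exact this.1
    have hq' : q = P w t := hP2 w t q hqpath
    rw [← hq', hq, Walk.length_cons]
  · intro g hg
    obtain ⟨w, hadj, q, hq⟩ := Walk.exists_eq_cons_of_ne hg (P g t)
    show G.Adj g (if h : g = t then t else (P g t).getVert 1)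
    rw [dif_neg hg, hq, Walk.getVert_cons_succ, Walk.getVert_zero]
    exact hadj
  · intro a b hadj
    have hab : a ≠ b := hadj.ne
    by_cases hat : a = t
    · right
      have hbt : b ≠ t := fun h => hab (hat.trans h.symm)
      have hadj' : G.Adj b t := hat ▸ hadj.symm
      have hew : (Walk.cons hadj' Walk.nil : G.Walk b t).IsPath := by
        simp [Walk.cons_isPath_iff, hbt]
      have heq := hP2 b t _ hew
      show (if h : b = t then t else (P b t).getVert 1) = a
      rw [dif_neg hbt, ← heq, Walk.getVert_cons_succ, Walk.getVert_zero]
      exact hat.symm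
    by_cases hbt : b = t
    · left
      have hadj' : G.Adj a t := hbt ▸ hadj
      have hew : (Walk.cons hadj' Walk.nil : G.Walk a t).IsPath := by
        simp [Walk.cons_isPath_iff]
        exact fun h => hab (h.trans hbt.symm)
      have heq := hP2 a t _ hew
      show (if h : a = t then t else (P a t).getVert 1) = b
      rw [dif_neg hat, ← heq, Walk.getVert_cons_succ, Walk.getVert_zero]
      exact hbt.symm
    by_cases hmem : a ∈ (P b t).support
    · right
      have htk : ((P b t).takeUntil a hmem).IsPath := (hP1 b t).takeUntil hmem
      have hew : (Walk.cons hadj.symm Walk.nil : G.Walk b a).IsPath := by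
        simp [Walk.cons_isPath_iff]
        exact fun h => hab h.symm
      have htk' : (P b t).takeUntil a hmem = Walk.cons hadj.symm Walk.nil := by
        rw [hP2 b a _ htk, hP2 b a _ hew]
      have hspec := Walk.take_spec (P b t) hmem
      rw [htk'] at hspec
      rw [Walk.cons_append, Walk.nil_append] at hspec
      show (if h : b = t then t else (P b t).getVert 1) = a
      rw [dif_neg hbt, ← hspec, Walk.getVert_cons_succ, Walk.getVert_zero]
    · left
      have hW : (Walk.cons hadj (P b t) : G.Walk a t).IsPath := by
        rw [Walk.cons_isPath_iff]
        exact ⟨hP1 b t, hmem⟩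
      have heq := hP2 a t _ hW
      show (if h : a = t then t else (P a t).getVert 1) = b
      rw [dif_neg hat, ← heq, Walk.getVert_cons_succ, Walk.getVert_zero]

end FromTree

end TreeBalanced


/-- Every tree has a balanced circle-contact representation: there are circles
(centers `c v`, radii `r v > 0`) whose open disks are pairwise disjoint, tangent
exactly when the corresponding vertices are adjacent, and whose radii differ by a
factor of at most `2 n`. -/
theorem tree_balanced_circle_contact
    (V : Type) [Fintype V] [Nonempty V] (G : SimpleGraph V) (hG : G.IsTree) :
    ∃ (c : V → EuclideanSpace ℝ (Fin 2)) (r : V → ℝ),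
      (∀ v, 0 < r v) ∧
      (∀ u v : V, u ≠ v →
        r u + r v ≤ dist (c u) (c v) ∧ (dist (c u) (c v) = r u + r v ↔ G.Adj u v)) ∧
      (∀ u v : V, r u ≤ 2 * (Fintype.card V : ℝ) * r v) := by
  classical
  obtain ⟨t⟩ := ‹Nonempty V›
  obtain ⟨par, depth, hs, hadj1, hadj2⟩ := TreeBalanced.exists_spec hG t
  set rk : V → ℕ := fun v => ((Fintype.equivFin V) v : ℕ) with hrk'
  have hrk : Function.Injective rk := by
    intro a b h
    exact (Fintype.equivFin V).injective (Fin.ext h)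
  refine ⟨TreeBalanced.cpt par t depth rk, fun v => (TreeBalanced.wgt par v : ℝ), ?_, ?_, ?_⟩
  · intro v
    have hv := hs.wgt_pos v
    show (0 : ℝ) < (TreeBalanced.wgt par v : ℝ)
    exact_mod_cast Nat.lt_of_lt_of_le Nat.zero_lt_one hv
  · intro u v hne
    exact hs.pair_main rk hrk G hadj1 hadj2 u v hne
  · intro u v
    have h1 : TreeBalanced.wgt par u ≤ Fintype.card V := hs.wgt_le u
    have h2 : 1 ≤ TreeBalanced.wgt par v := hs.wgt_pos v
    have h3 : TreeBalanced.wgt par u ≤ 2 * Fintype.card V * TreeBalanced.wgt par v := by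
      calc TreeBalanced.wgt par u ≤ Fintype.card V := h1
        _ = Fintype.card V * 1 := (Nat.mul_one _).symm
        _ ≤ Fintype.card V * TreeBalanced.wgt par v := Nat.mul_le_mul_left _ h2
        _ ≤ 2 * Fintype.card V * TreeBalanced.wgt par v := by
            have : Fintype.card V ≤ 2 * Fintype.card V := by omega
            exact Nat.mul_le_mul_right _ this
    show (TreeBalanced.wgt par u : ℝ) ≤ 2 * (Fintype.card V : ℝ) * (TreeBalanced.wgt par v : ℝ)
    exact_mod_cast h3
end

section
/- Every subgraph of a fan admits a circle-contact representation in which, for each circle representing a vertex other than the center, the vertical strip containing that circle is empty above the circle. Precisely: let n ≥ 1 and let Fₙ be the fan graph on vertex set Fin (n+1) in which vertex 0 (the center) is adjacent to every vertex i with 1 ≤ i ≤ n, and vertices i and i+1 are adjacent for 1 ≤ i ≤ n−1. Let G be any simple graph on Fin (n+1) with G.Adj ≤ Fₙ.Adj. Then there exist maps c : Fin (n+1) → ℝ² and r : Fin (n+1) → ℝ with r v > 0 for all v, such that for all distinct u, v, dist(c u, c v) ≥ r u + r v with equality if and only if u and v are adjacent in G, and additionally for every vertex v ≠ 0 and every vertex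 u ≠ v, the closed disk closedBall(c u, r u) is disjoint from the region {p ∈ ℝ² : |p₁ − (c v)₁| ≤ r v, p₂ > (c v)₂, and dist(p, c v) > r v} (the part of the vertical strip of the circle of v lying above that circle). -/
/-- The fan graph on `Fin (n+1)`: vertex `0` (the center) is adjacent to every other
vertex, and vertices `i`, `i+1` are adjacent for `1 ≤ i ≤ n-1`. -/
def fanGraph (n : ℕ) : SimpleGraph (Fin (n + 1)) :=
  SimpleGraph.fromRel fun u v => u = 0 ∨ (1 ≤ (u : ℕ) ∧ (v : ℕ) = (u : ℕ) + 1)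

noncomputable def pt (x y : ℝ) : EuclideanSpace ℝ (Fin 2) := WithLp.toLp 2 ![x, y]

lemma pt_zero (x y : ℝ) : pt x y 0 = x := rfl
lemma pt_one (x y : ℝ) : pt x y 1 = y := rfl

lemma dist_sq_eq (p q : EuclideanSpace ℝ (Fin 2)) :
    dist p q ^ 2 = (p 0 - q 0)^2 + (p 1 - q 1)^2 := by
  rw [EuclideanSpace.dist_eq, Real.sq_sqrt (by positivity)]
  simp [Fin.sum_univ_two, Real.dist_eq, sq_abs]

lemma coord_le_dist (p q : EuclideanSpace ℝ (Fin 2)) (i : Fin 2) :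
    |p i - q i| ≤ dist p q := by
  have h2 : (p i - q i)^2 ≤ dist p q ^ 2 := by
    rw [dist_sq_eq]
    fin_cases i <;> simp <;> nlinarith [sq_nonneg (p 0 - q 0), sq_nonneg (p 1 - q 1)]
  calc |p i - q i| = Real.sqrt ((p i - q i)^2) := (Real.sqrt_sq_eq_abs _).symm
    _ ≤ Real.sqrt (dist p q ^ 2) := Real.sqrt_le_sqrt h2
    _ = dist p q := Real.sqrt_sq dist_nonneg

lemma dist_pt (a b x y : ℝ) : dist (pt a b) (pt x y) = Real.sqrt ((a-x)^2 + (b-y)^2) := by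
  rw [EuclideanSpace.dist_eq]
  simp [Fin.sum_univ_two, pt, Real.dist_eq, sq_abs]

open Classical in
noncomputable def fanStep (ρ b : ℝ) (sp : Prop) : ℝ × ℝ :=
  let r := if sp then b^2/(2*(ρ - b)) else b^2/(4*(ρ - b))
  (b + r, r)

open Classical in
noncomputable def fanXR (ρ : ℝ) (spoke pathe : ℕ → Prop) : ℕ → ℝ × ℝ
  | 0 => (0, 0)
  | 1 => fanStep ρ 1 (spoke 1)
  | (i+2) => fanStep ρ ((fanXR ρ spoke pathe (i+1)).1 + (fanXR ρ spoke pathe (i+1)).2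
      + (if pathe (i+1) then 0 else 1)) (spoke (i+2))

open Classical in
lemma fanXR_succ (ρ : ℝ) (spoke pathe : ℕ → Prop) (i : ℕ) (hi : 1 ≤ i) :
    fanXR ρ spoke pathe (i+1) = fanStep ρ ((fanXR ρ spoke pathe i).1 + (fanXR ρ spoke pathe i).2
      + (if pathe i then 0 else 1)) (spoke (i+1)) := by
  cases i with
  | zero => omega
  | succ j => rfl

lemma fanStep_spec {ρ b : ℝ} (sp : Prop) (hb : 1 ≤ b) (hρ : b + b^2 ≤ ρ) :
    0 < (fanStep ρ b sp).2 ∧ (fanStep ρ b sp).2 ≤ 1/2 ∧ (fanStep ρ b sp).1 = b + (fanStep ρ b sp).2 ∧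
    (sp → ((fanStep ρ b sp).1)^2 + ρ^2 = (ρ + (fanStep ρ b sp).2)^2) ∧
    (¬ sp → (ρ + (fanStep ρ b sp).2)^2 < ((fanStep ρ b sp).1)^2 + ρ^2) := by
  classical
  have hb0 : (0:ℝ) < b := by linarith
  have hbsq : (1:ℝ) ≤ b^2 := by nlinarith
  have h1 : b^2 ≤ ρ - b := by linarith
  have h2 : (0:ℝ) < ρ - b := by linarith
  by_cases h : sp
  · have e : fanStep ρ b sp = (b + b^2/(2*(ρ-b)), b^2/(2*(ρ-b))) := by
      simp [fanStep, h]
    rw [e]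
    refine ⟨by positivity, ?_, rfl, fun _ => ?_, fun hs => absurd h hs⟩
    · rw [div_le_div_iff₀ (by linarith) (by norm_num)]; nlinarith
    · field_simp; ring
  · have e : fanStep ρ b sp = (b + b^2/(4*(ρ-b)), b^2/(4*(ρ-b))) := by
      simp [fanStep, h]
    rw [e]
    refine ⟨by positivity, ?_, rfl, fun hs => absurd hs h, fun _ => ?_⟩
    · rw [div_le_div_iff₀ (by linarith) (by norm_num)]; nlinarith
    · have e2 : (b + b^2/(4*(ρ-b)))^2 + ρ^2 - (ρ + b^2/(4*(ρ-b)))^2 = b^2/2 := by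
        field_simp; ring
      nlinarith [e2]

lemma fanXR_props (ρ : ℝ) (spoke pathe : ℕ → Prop) (n : ℕ)
    (hρ : (3*(n:ℝ)+2) + (3*(n:ℝ)+2)^2 ≤ ρ) :
    ∀ i, 1 ≤ i → i ≤ n →
      0 < (fanXR ρ spoke pathe i).2 ∧ (fanXR ρ spoke pathe i).2 ≤ 1/2 ∧
      1 ≤ (fanXR ρ spoke pathe i).1 ∧ (fanXR ρ spoke pathe i).1 ≤ 3*i ∧
      (spoke i → ((fanXR ρ spoke pathe i).1)^2 + ρ^2 = (ρ + (fanXR ρ spoke pathe i).2)^2) ∧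
      (¬ spoke i → (ρ + (fanXR ρ spoke pathe i).2)^2 < ((fanXR ρ spoke pathe i).1)^2 + ρ^2) := by
  classical
  have hn0 : (0:ℝ) ≤ (n:ℝ) := Nat.cast_nonneg n
  intro i
  induction i with
  | zero => omega
  | succ j ih =>
    intro _ hjn
    by_cases hj : 1 ≤ j
    · -- successor case, j ≥ 1
      have hjn' : j ≤ n := by omega
      obtain ⟨hr0, hr1, hx1, hx3, _, _⟩ := ih hj hjn'
      have heq := fanXR_succ ρ spoke pathe j hj
      obtain ⟨b, hbdef⟩ : ∃ b : ℝ, (fanXR ρ spoke pathe j).1 + (fanXR ρ spoke pathe j).2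
          + (if pathe j then 0 else 1) = b := ⟨_, rfl⟩
      rw [hbdef] at heq
      have hb1 : 1 ≤ b := by
        rw [← hbdef]; split_ifs <;> linarith
      have hjr : (j:ℝ) ≤ (n:ℝ) - 1 := by
        have : (j:ℝ) + 1 ≤ (n:ℝ) := by exact_mod_cast hjn
        linarith
      have hb52 : b ≤ 3*(j:ℝ) + 5/2 := by
        rw [← hbdef]; split_ifs <;> linarith
      have hb3 : b ≤ 3*(n:ℝ) + 2 := by nlinarith
      have hρb : b + b^2 ≤ ρ := by nlinarith
      obtain ⟨s1, s2, s3, s4, s5⟩ := fanStep_spec (ρ := ρ) (b := b) (spoke (j+1)) hb1 hρb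
      rw [heq]
      refine ⟨s1, s2, by rw [s3]; linarith, ?_, s4, s5⟩
      rw [s3]
      push_cast
      linarith
    · -- j = 0, i.e. i = 1
      have hj0 : j = 0 := by omega
      subst hj0
      have hb1 : (1:ℝ) ≤ 1 := le_refl _
      have hρb : (1:ℝ) + 1^2 ≤ ρ := by nlinarith
      obtain ⟨s1, s2, s3, s4, s5⟩ := fanStep_spec (ρ := ρ) (b := (1:ℝ)) (spoke 1) hb1 hρb
      have heq : fanXR ρ spoke pathe 1 = fanStep ρ 1 (spoke 1) := rfl
      rw [heq]
      exact ⟨s1, s2, by rw [s3]; linarith, by rw [s3]; norm_num; linarith, s4, s5⟩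

open Classical in
lemma fanXR_step_eq (ρ : ℝ) (spoke pathe : ℕ → Prop) (n : ℕ)
    (hρ : (3*(n:ℝ)+2) + (3*(n:ℝ)+2)^2 ≤ ρ) (j : ℕ) (hj : 1 ≤ j) (hjn : j + 1 ≤ n) :
    (fanXR ρ spoke pathe (j+1)).1 = (fanXR ρ spoke pathe j).1 + (fanXR ρ spoke pathe j).2
      + (if pathe j then 0 else 1) + (fanXR ρ spoke pathe (j+1)).2 := by
  have hn0 : (0:ℝ) ≤ (n:ℝ) := Nat.cast_nonneg n
  obtain ⟨hr0, hr1, hx1, hx3, _, _⟩ := fanXR_props ρ spoke pathe n hρ j hj (by omega)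
  have heq := fanXR_succ ρ spoke pathe j hj
  obtain ⟨b, hbdef⟩ : ∃ b : ℝ, (fanXR ρ spoke pathe j).1 + (fanXR ρ spoke pathe j).2
      + (if pathe j then 0 else 1) = b := ⟨_, rfl⟩
  rw [hbdef] at heq ⊢
  have hb1 : 1 ≤ b := by rw [← hbdef]; split_ifs <;> linarith
  have hjr : (j:ℝ) ≤ (n:ℝ) - 1 := by
    have : (j:ℝ) + 1 ≤ (n:ℝ) := by exact_mod_cast hjn
    linarith
  have hb52 : b ≤ 3*(j:ℝ) + 5/2 := by rw [← hbdef]; split_ifs <;> linarith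
  have hb3 : b ≤ 3*(n:ℝ) + 2 := by nlinarith
  have hρb : b + b^2 ≤ ρ := by nlinarith
  obtain ⟨s1, s2, s3, s4, s5⟩ := fanStep_spec (ρ := ρ) (b := b) (spoke (j+1)) hb1 hρb
  rw [heq, s3]

open Classical in
lemma fanXR_gap (ρ : ℝ) (spoke pathe : ℕ → Prop) (n : ℕ)
    (hρ : (3*(n:ℝ)+2) + (3*(n:ℝ)+2)^2 ≤ ρ) :
    ∀ u v, 1 ≤ u → u < v → v ≤ n →
      ((fanXR ρ spoke pathe u).1 + (fanXR ρ spoke pathe u).2 + (fanXR ρ spoke pathe v).2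
        ≤ (fanXR ρ spoke pathe v).1) ∧
      ((pathe u ∧ v = u + 1) → (fanXR ρ spoke pathe v).1
        = (fanXR ρ spoke pathe u).1 + (fanXR ρ spoke pathe u).2 + (fanXR ρ spoke pathe v).2) ∧
      (¬(pathe u ∧ v = u + 1) → (fanXR ρ spoke pathe u).1 + (fanXR ρ spoke pathe u).2
        + (fanXR ρ spoke pathe v).2 < (fanXR ρ spoke pathe v).1) := by
  intro u v hu huv
  induction v, huv using Nat.le_induction with
  | base =>
    intro hvn
    have heq := fanXR_step_eq ρ spoke pathe n hρ u hu hvn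
    refine ⟨by split_ifs at heq <;> linarith, fun ⟨hp, _⟩ => by simp [hp] at heq; linarith,
      fun hnp => ?_⟩
    have hnp' : ¬ pathe u := fun hp => hnp ⟨hp, rfl⟩
    simp [hnp'] at heq
    linarith
  | succ v hv ih =>
    intro hvn
    have hvn' : v ≤ n := by omega
    have h1v : 1 ≤ v := by omega
    obtain ⟨g1, g2, g3⟩ := ih hvn'
    obtain ⟨rv0, _, _, _, _, _⟩ := fanXR_props ρ spoke pathe n hρ v h1v hvn'
    have heq := fanXR_step_eq ρ spoke pathe n hρ v h1v hvn
    have key : (fanXR ρ spoke pathe u).1 + (fanXR ρ spoke pathe u).2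
        + (fanXR ρ spoke pathe (v+1)).2 < (fanXR ρ spoke pathe (v+1)).1 := by
      split_ifs at heq <;> linarith
    exact ⟨le_of_lt key, fun ⟨_, hveq⟩ => by omega, fun _ => key⟩

/-- Every subgraph of a fan admits a circle-contact representation in which, for each
circle representing a vertex other than the center, the part of its vertical strip
lying above the circle is empty (disjoint from all the other disks). -/
theorem subgraph_of_fan_circle_contact_empty_strips
    (n : ℕ) (hn : 1 ≤ n) (G : SimpleGraph (Fin (n + 1)))
    (hG : ∀ u v, G.Adj u v → (fanGraph n).Adj u v) :
    ∃ (c : Fin (n + 1) → EuclideanSpace ℝ (Fin 2)) (r : Fin (n + 1) → ℝ),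
      (∀ v, 0 < r v) ∧
      (∀ u v, u ≠ v →
        r u + r v ≤ dist (c u) (c v) ∧ (dist (c u) (c v) = r u + r v ↔ G.Adj u v)) ∧
      (∀ v, v ≠ 0 → ∀ u, u ≠ v →
        Disjoint (Metric.closedBall (c u) (r u))
          {p : EuclideanSpace ℝ (Fin 2) |
            |p 0 - c v 0| ≤ r v ∧ c v 1 < p 1 ∧ r v < dist p (c v)}) := by
  classical
  set ρ : ℝ := (3*(n:ℝ)+2) + (3*(n:ℝ)+2)^2 with hρdef
  have hρ : (3*(n:ℝ)+2) + (3*(n:ℝ)+2)^2 ≤ ρ := le_refl _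
  have hn0 : (0:ℝ) ≤ (n:ℝ) := Nat.cast_nonneg n
  have hρpos : 0 < ρ := by rw [hρdef]; nlinarith
  set spoke : ℕ → Prop := fun i => ∃ h : i < n + 1, G.Adj 0 ⟨i, h⟩ with hspokedef
  set pathe : ℕ → Prop := fun i => ∃ h : i + 1 < n + 1, G.Adj ⟨i, Nat.lt_of_succ_lt h⟩ ⟨i+1, h⟩
    with hpathedef
  set X : ℕ → ℝ := fun i => (fanXR ρ spoke pathe i).1 with hXdef
  set R : ℕ → ℝ := fun i => (fanXR ρ spoke pathe i).2 with hRdef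
  have props := fanXR_props ρ spoke pathe n hρ
  have gap := fanXR_gap ρ spoke pathe n hρ
  -- spoke/pathe characterizations
  have hspoke : ∀ v : Fin (n+1), v ≠ 0 → (spoke (v:ℕ) ↔ G.Adj 0 v) := by
    intro v hv
    constructor
    · rintro ⟨h, adj⟩
      rwa [show (⟨(v:ℕ), h⟩ : Fin (n+1)) = v from Fin.ext rfl] at adj
    · intro adj
      exact ⟨v.isLt, by rwa [show (⟨(v:ℕ), v.isLt⟩ : Fin (n+1)) = v from Fin.ext rfl]⟩
  have hpathe : ∀ u v : Fin (n+1), (u:ℕ) ≠ 0 → (v:ℕ) = (u:ℕ) + 1 →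
      (pathe (u:ℕ) ↔ G.Adj u v) := by
    intro u v hu huv
    constructor
    · rintro ⟨h, adj⟩
      rwa [show (⟨(u:ℕ), Nat.lt_of_succ_lt h⟩ : Fin (n+1)) = u from Fin.ext rfl,
        show (⟨(u:ℕ)+1, h⟩ : Fin (n+1)) = v from Fin.ext (by simp [huv])] at adj
    · intro adj
      refine ⟨by omega, ?_⟩
      rwa [show (⟨(u:ℕ), _⟩ : Fin (n+1)) = u from Fin.ext rfl,
        show (⟨(u:ℕ)+1, _⟩ : Fin (n+1)) = v from Fin.ext (by simp [huv])]
  -- adjacency for nonzero pairs forces consecutive values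
  have hadj_shape : ∀ u v : Fin (n+1), u ≠ 0 → v ≠ 0 → (u:ℕ) < (v:ℕ) → G.Adj u v →
      (v:ℕ) = (u:ℕ) + 1 := by
    intro u v hu hv huv hadj
    have hfan := hG u v hadj
    rw [fanGraph, SimpleGraph.fromRel_adj] at hfan
    obtain ⟨-, h | h⟩ := hfan
    · rcases h with h | ⟨-, h⟩
      · exact absurd h hu
      · exact h
    · rcases h with h | ⟨-, h⟩
      · exact absurd h hv
      · omega
  have hval0 : ∀ v : Fin (n+1), v ≠ 0 ↔ (v:ℕ) ≠ 0 := by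
    intro v
    constructor
    · intro h hc
      exact h (Fin.ext hc)
    · intro h hc
      exact h (by simp [hc])
  refine ⟨fun v => if v = 0 then pt 0 (-ρ) else pt (X (v:ℕ)) 0,
      fun v => if v = 0 then ρ else R (v:ℕ), ?_, ?_, ?_⟩
  · intro v
    dsimp only
    split_ifs with h
    · exact hρpos
    · have h1 : 1 ≤ (v:ℕ) := by have := (hval0 v).1 h; omega
      have h2 : (v:ℕ) ≤ n := by omega
      exact (props _ h1 h2).1
  · -- distances
    have key : ∀ u v : Fin (n+1), (u:ℕ) < (v:ℕ) →
        ((if u = 0 then ρ else R (u:ℕ)) + (if v = 0 then ρ else R (v:ℕ))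
          ≤ dist (if u = 0 then pt 0 (-ρ) else pt (X (u:ℕ)) 0)
              (if v = 0 then pt 0 (-ρ) else pt (X (v:ℕ)) 0)) ∧
        (dist (if u = 0 then pt 0 (-ρ) else pt (X (u:ℕ)) 0)
              (if v = 0 then pt 0 (-ρ) else pt (X (v:ℕ)) 0)
          = (if u = 0 then ρ else R (u:ℕ)) + (if v = 0 then ρ else R (v:ℕ)) ↔ G.Adj u v) := by
      intro u v huv
      have hv0 : v ≠ 0 := by
        rw [hval0]; omega
      have hv1 : 1 ≤ (v:ℕ) := by omega
      have hvn : (v:ℕ) ≤ n := by omega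
      obtain ⟨rv0, rv1, xv1, xv3, sv1, sv2⟩ := props _ hv1 hvn
      by_cases hu0 : u = 0
      · -- center--path pair
        subst hu0
        rw [if_pos rfl, if_pos rfl, if_neg hv0, if_neg hv0]
        have hd : dist (pt 0 (-ρ)) (pt (X (v:ℕ)) 0) = Real.sqrt ((X (v:ℕ))^2 + ρ^2) := by
          rw [dist_pt]
          congr 1
          ring
        rw [hd]
        have hnn : 0 ≤ ρ + R (v:ℕ) := by linarith
        by_cases hadj : G.Adj 0 v
        · have hs := sv1 ((hspoke v hv0).2 hadj)
          have : Real.sqrt ((X (v:ℕ))^2 + ρ^2) = ρ + R (v:ℕ) := by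
            rw [hs, Real.sqrt_sq hnn]
          exact ⟨le_of_eq this.symm, by rw [this]; exact iff_of_true rfl hadj⟩
        · have hs := sv2 (fun h => hadj ((hspoke v hv0).1 h))
          have hlt : ρ + R (v:ℕ) < Real.sqrt ((X (v:ℕ))^2 + ρ^2) := by
            have := Real.sqrt_lt_sqrt (sq_nonneg (ρ + R (v:ℕ))) hs
            rwa [Real.sqrt_sq hnn] at this
          exact ⟨le_of_lt hlt, iff_of_false (by linarith) hadj⟩
      · -- path--path pair
        have hu0' : (u:ℕ) ≠ 0 := (hval0 u).1 hu0
        have hu1 : 1 ≤ (u:ℕ) := by omega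
        rw [if_neg hu0, if_neg hu0, if_neg hv0, if_neg hv0]
        obtain ⟨ru0, ru1, xu1, xu3, _, _⟩ := props _ hu1 (by omega)
        obtain ⟨g1, g2, g3⟩ := gap (u:ℕ) (v:ℕ) hu1 huv hvn
        have hd : dist (pt (X (u:ℕ)) 0) (pt (X (v:ℕ)) 0) = X (v:ℕ) - X (u:ℕ) := by
          rw [dist_pt]
          rw [show (X (u:ℕ) - X (v:ℕ))^2 + ((0:ℝ)-0)^2 = (X (v:ℕ) - X (u:ℕ))^2 by ring]
          exact Real.sqrt_sq (by linarith)
        rw [hd]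
        by_cases hadj : G.Adj u v
        · have hvv : (v:ℕ) = (u:ℕ) + 1 := hadj_shape u v hu0 hv0 huv hadj
          have hp : pathe (u:ℕ) := (hpathe u v hu0' hvv).2 hadj
          have := g2 ⟨hp, hvv⟩
          exact ⟨by linarith, iff_of_true (by linarith) hadj⟩
        · have hnp : ¬(pathe (u:ℕ) ∧ (v:ℕ) = (u:ℕ) + 1) := by
            rintro ⟨hp, hvv⟩
            exact hadj ((hpathe u v hu0' hvv).1 hp)
          have := g3 hnp
          exact ⟨by linarith, iff_of_false (by linarith) hadj⟩
    intro u v huv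
    dsimp only
    rcases lt_trichotomy (u:ℕ) (v:ℕ) with h | h | h
    · exact (key u v h)
    · exact absurd (Fin.ext h) huv
    · obtain ⟨k1, k2⟩ := key v u h
      rw [dist_comm] at k1 k2
      rw [add_comm]
      exact ⟨k1, by rw [k2]; exact ⟨fun h => h.symm, fun h => h.symm⟩⟩
  · -- strips
    intro v hv u huv
    dsimp only
    have hv1 : 1 ≤ (v:ℕ) := by have := (hval0 v).1 hv; omega
    have hvn : (v:ℕ) ≤ n := by omega
    obtain ⟨rv0, rv1, xv1, xv3, _, _⟩ := props _ hv1 hvn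
    rw [Set.disjoint_left]
    intro p hp hps
    simp only [Set.mem_setOf_eq, if_neg hv, pt_zero, pt_one] at hps
    obtain ⟨hs1, hs2, hs3⟩ := hps
    rw [Metric.mem_closedBall] at hp
    by_cases hu0 : u = 0
    · subst hu0
      rw [if_pos rfl, if_pos rfl] at hp
      have h1 := coord_le_dist p (pt 0 (-ρ)) 1
      rw [pt_one] at h1
      have : |p 1 + ρ| ≤ ρ := by
        calc |p 1 + ρ| = |p 1 - (-ρ)| := by ring_nf
          _ ≤ dist p (pt 0 (-ρ)) := h1
          _ ≤ ρ := hp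
      have hple : p 1 ≤ 0 := by
        rcases abs_le.1 this with ⟨-, h⟩
        linarith
      linarith
    · rw [if_neg hu0, if_neg hu0] at hp
      have hu0' : (u:ℕ) ≠ 0 := (hval0 u).1 hu0
      have hu1 : 1 ≤ (u:ℕ) := by omega
      have hun : (u:ℕ) ≤ n := by omega
      obtain ⟨ru0, ru1, xu1, xu3, _, _⟩ := props _ hu1 hun
      have hdsq : (p 0 - X (u:ℕ))^2 + (p 1)^2 ≤ (R (u:ℕ))^2 := by
        have := dist_sq_eq p (pt (X (u:ℕ)) 0)
        rw [pt_zero, pt_one, sub_zero] at this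
        nlinarith [dist_nonneg (x := p) (y := pt (X (u:ℕ)) 0)]
      have habs := abs_le.1 hs1
      have huvval : (u:ℕ) ≠ (v:ℕ) := fun h => huv (Fin.ext h)
      rcases lt_or_gt_of_ne huvval with h | h
      · -- u left of v
        obtain ⟨g1, -, -⟩ := gap (u:ℕ) (v:ℕ) hu1 h hvn
        have hge : X (u:ℕ) + R (u:ℕ) ≤ p 0 := by linarith
        have hfac : 0 ≤ (p 0 - X (u:ℕ) - R (u:ℕ)) * (p 0 - X (u:ℕ) + R (u:ℕ)) :=
          mul_nonneg (by linarith) (by linarith)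
        have hp1 : 0 < p 1 * p 1 := mul_pos hs2 hs2
        have hexp : (p 0 - X (u:ℕ) - R (u:ℕ)) * (p 0 - X (u:ℕ) + R (u:ℕ))
            = (p 0 - X (u:ℕ))^2 - (R (u:ℕ))^2 := by ring
        have hsq : p 1 ^ 2 = p 1 * p 1 := sq (p 1)
        linarith [hfac, hp1, hdsq, hexp]
      · -- v left of u
        obtain ⟨g1, -, -⟩ := gap (v:ℕ) (u:ℕ) hv1 h hun
        have hge : p 0 ≤ X (u:ℕ) - R (u:ℕ) := by linarith
        have hfac : 0 ≤ (X (u:ℕ) - p 0 - R (u:ℕ)) * (X (u:ℕ) - p 0 + R (u:ℕ)) :=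
          mul_nonneg (by linarith) (by linarith)
        have hp1 : 0 < p 1 * p 1 := mul_pos hs2 hs2
        have hexp : (X (u:ℕ) - p 0 - R (u:ℕ)) * (X (u:ℕ) - p 0 + R (u:ℕ))
            = (p 0 - X (u:ℕ))^2 - (R (u:ℕ))^2 := by ring
        have hsq : p 1 ^ 2 = p 1 * p 1 := sq (p 1)
        linarith [hfac, hp1, hdsq, hexp]
end

section
/- Existence of weight-balanced binary trees: let w₁, …, w_m be positive real numbers (m ≥ 1) with W = w₁ + ⋯ + w_m. Then there exists a binary tree t with exactly m leaves such that, for each i with 1 ≤ i ≤ m, the depth of the i-th leaf of t in left-to-right order is at most logb 2 (W / wᵢ) + 2. -/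
/-- A binary tree: either a single leaf or an internal node with two subtrees. -/
inductive BinTree : Type
  | leaf : BinTree
  | node : BinTree → BinTree → BinTree

/-- The list of depths of the leaves of a binary tree, in left-to-right order. -/
def BinTree.leafDepths : BinTree → List ℕ
  | .leaf => [0]
  | .node l r => (l.leafDepths.map (· + 1)) ++ (r.leafDepths.map (· + 1))

/-- Membership-aware version of `Forall₂.imp`. -/
private lemma forall₂_imp_mem {α β : Type*} {R S : α → β → Prop} :
    ∀ {l₁ : List α} {l₂ : List β}, List.Forall₂ R l₁ l₂ →
      (∀ a ∈ l₁, ∀ b ∈ l₂, R a b → S a b) → List.Forall₂ S l₁ l₂ := by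
  intro l₁ l₂ h
  induction h with
  | nil => intro _; exact List.Forall₂.nil
  | cons hab h ih =>
    intro hmem
    exact List.Forall₂.cons
      (hmem _ (by simp) _ (by simp) hab)
      (ih fun a ha b hb => hmem a (by simp [ha]) b (by simp [hb]))

private lemma dropWhile_head_false {α : Type*} (p : α → Bool) :
    ∀ (l : List α) (h : α) (tail : List α), l.dropWhile p = h :: tail → p h = false := by
  intro l
  induction l with
  | nil => simp [List.dropWhile]
  | cons a l ih =>
    intro h tail he
    rw [List.dropWhile_cons] at he
    split at he
    · exact ih _ _ he
    · cases he
      simp_all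

private lemma aux_radius_le {L : List (ℝ × ℝ)} {a b : ℝ}
    (hpos : ∀ p ∈ L, 0 < p.2)
    (hpair : L.Pairwise fun p q => p.1 + p.2 ≤ q.1 - q.2)
    (hicc : ∀ p ∈ L, a ≤ p.1 ∧ p.1 ≤ b)
    (hlen : 2 ≤ L.length) : ∀ p ∈ L, p.2 ≤ b - a := by
  match L with
  | x :: y :: rest =>
    intro p hp
    have hxy : x.1 + x.2 ≤ y.1 - y.2 := (List.pairwise_cons.1 hpair).1 y (by simp)
    rcases List.mem_cons.1 hp with h | h
    · subst h
      have h1 := (hicc p (by simp)).1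
      have h2 := (hicc y (by simp)).2
      have := hpos y (by simp)
      linarith
    · have hxp : x.1 + x.2 ≤ p.1 - p.2 :=
        (List.pairwise_cons.1 hpair).1 p h
      have h1 := (hicc x (by simp)).1
      have h2 := (hicc p hp).2
      have := hpos x (by simp)
      linarith

/-- Singleton case. -/
private lemma single_case {p : ℝ × ℝ} {a b : ℝ} (hp2 : 0 < p.2)
    (hlow : p.2 ≤ 2 * (b - a)) :
    ∃ t : BinTree,
      List.Forall₂ (fun (d : ℕ) q => (d : ℝ) ≤ Real.logb 2 ((b - a) / q.2) + 1)
        t.leafDepths [p] := by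
  refine ⟨BinTree.leaf, ?_⟩
  have hV : 0 < b - a := by linarith
  have h12 : (1:ℝ)/2 ≤ (b - a) / p.2 := by
    rw [div_le_div_iff₀ (by norm_num) hp2]; linarith
  have hlog : Real.logb 2 ((1:ℝ)/2) ≤ Real.logb 2 ((b - a) / p.2) :=
    (Real.logb_le_logb one_lt_two (by norm_num) (by positivity)).2 h12
  have hval : Real.logb 2 ((1:ℝ)/2) = -1 := by
    rw [one_div, Real.logb_inv, Real.logb_self_eq_one one_lt_two]
  simp only [BinTree.leafDepths]
  refine List.Forall₂.cons ?_ List.Forall₂.nil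
  push_cast
  linarith

private lemma key_lemma : ∀ (D : ℕ) (L : List (ℝ × ℝ)) (a b : ℝ),
    L ≠ [] → (∀ p ∈ L, 0 < p.2) →
    L.Pairwise (fun p q => p.1 + p.2 ≤ q.1 - q.2) →
    (∀ p ∈ L, a ≤ p.1 ∧ p.1 ≤ b) →
    (∀ p ∈ L, p.2 ≤ 2 * (b - a)) →
    (∀ p ∈ L, b - a ≤ 2 ^ D * p.2) →
    ∃ t : BinTree,
      List.Forall₂ (fun (d : ℕ) p => (d : ℝ) ≤ Real.logb 2 ((b - a) / p.2) + 1)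
        t.leafDepths L := by
  intro D
  induction D with
  | zero =>
    intro L a b hne hpos hpair hicc hlow hfuel
    match L, hne with
    | [p], _ => exact single_case (hpos p (by simp)) (hlow p (by simp))
    | p :: q :: rest, _ =>
      exfalso
      have hpq : p.1 + p.2 ≤ q.1 - q.2 := (List.pairwise_cons.1 hpair).1 q (by simp)
      have h1 := (hicc p (by simp)).1
      have h2 := (hicc q (by simp)).2
      have hq2 := hpos q (by simp)
      have hf := hfuel p (by simp)
      simp only [pow_zero, one_mul] at hf
      linarith
  | succ D ih =>
    intro L a b hne hpos hpair hicc hlow hfuel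
    match L, hne with
    | [p], _ => exact single_case (hpos p (by simp)) (hlow p (by simp))
    | x :: y :: rest, _ =>
      set L : List (ℝ × ℝ) := x :: y :: rest with hLdef
      have hlen2 : 2 ≤ L.length := by simp [hLdef]
      have hrle : ∀ p ∈ L, p.2 ≤ b - a := aux_radius_le hpos hpair hicc hlen2
      have hV : 0 < b - a :=
        lt_of_lt_of_le (hpos x (by simp [hLdef])) (hrle x (by simp [hLdef]))
      set c : ℝ := (a + b) / 2 with hcdef
      have hca : c - a = (b - a) / 2 := by rw [hcdef]; ring
      have hbc : b - c = (b - a) / 2 := by rw [hcdef]; ring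
      set P : ℝ × ℝ → Bool := fun p => decide (p.1 ≤ c) with hPdef
      set L₁ := L.takeWhile P with hL1
      set L₂ := L.dropWhile P with hL2
      have hsplit : L₁ ++ L₂ = L := List.takeWhile_append_dropWhile
      have hmem1 : ∀ p ∈ L₁, p ∈ L := fun p hp => (List.takeWhile_sublist P).mem hp
      have hmem2 : ∀ p ∈ L₂, p ∈ L := fun p hp => (List.dropWhile_sublist P).mem hp
      have hpair1 : L₁.Pairwise (fun p q => p.1 + p.2 ≤ q.1 - q.2) :=
        List.Pairwise.sublist (List.takeWhile_sublist P) hpair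
      have hpair2 : L₂.Pairwise (fun p q => p.1 + p.2 ≤ q.1 - q.2) :=
        List.Pairwise.sublist (List.dropWhile_sublist P) hpair
      have hle1 : ∀ p ∈ L₁, p.1 ≤ c := by
        intro p hp
        have := List.mem_takeWhile_imp hp
        simpa [hPdef] using this
      have hge2 : ∀ p ∈ L₂, c ≤ p.1 := by
        intro p hp
        obtain ⟨h, tail, he⟩ := List.exists_cons_of_ne_nil (List.ne_nil_of_mem hp)
        have hPh : P h = false :=
          dropWhile_head_false P L h tail (by rw [← hL2]; exact he)
        have hh : ¬ h.1 ≤ c := by simpa [hPdef] using hPh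
        rw [he] at hp
        rcases List.mem_cons.1 hp with rfl | hptail
        · linarith [not_le.1 hh]
        · have h2 := hpair2
          rw [he] at h2
          have hrel : h.1 + h.2 ≤ p.1 - p.2 := (List.pairwise_cons.1 h2).1 p hptail
          have hh2 := hpos h (hmem2 h (by rw [he]; simp))
          have hp2 := hpos p (hmem2 p (by rw [he]; exact hp))
          linarith [not_le.1 hh]
      have hfuel' : ∀ p ∈ L, (b - a) / 2 ≤ 2 ^ D * p.2 := by
        intro p hp
        have h := hfuel p hp
        rw [pow_succ'] at h
        linarith
      have hlowhalf : ∀ p ∈ L, p.2 ≤ 2 * ((b - a) / 2) := by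
        intro p hp; have := hrle p hp; linarith
      -- a monotonicity converter : bound for half interval implies bound for full
      have hconv : ∀ (t : BinTree) (M : List (ℝ × ℝ)), (∀ p ∈ M, p ∈ L) →
          List.Forall₂ (fun (d : ℕ) p => (d : ℝ) ≤ Real.logb 2 ((b - a) / 2 / p.2) + 1)
            t.leafDepths M →
          List.Forall₂ (fun (d : ℕ) p => (d : ℝ) ≤ Real.logb 2 ((b - a) / p.2) + 1)
            t.leafDepths M := by
        intro t M hM h
        refine forall₂_imp_mem h ?_
        intro d _ p hp hd
        have hp2 := hpos p (hM p hp)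
        have : Real.logb 2 ((b - a) / 2 / p.2) ≤ Real.logb 2 ((b - a) / p.2) := by
          apply (Real.logb_le_logb one_lt_two (by positivity) (by positivity)).2
          apply div_le_div_of_nonneg_right _ hp2.le
          linarith
        linarith
      by_cases h1e : L₁ = []
      · -- all points in right half [c, b]
        have hLeq : L₂ = L := by rw [← hsplit, h1e]; simp
        obtain ⟨t, ht⟩ := ih L c b (by simp [hLdef])
          hpos hpair
          (fun p hp => ⟨hge2 p (by rw [hLeq]; exact hp), (hicc p hp).2⟩)
          (by rw [hbc]; exact hlowhalf)
          (by rw [hbc]; exact hfuel')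
        rw [hbc] at ht
        exact ⟨t, hconv t L (fun p hp => hp) ht⟩
      · by_cases h2e : L₂ = []
        · -- all points in left half [a, c]
          have hLeq : L₁ = L := by rw [← hsplit, h2e]; simp
          obtain ⟨t, ht⟩ := ih L a c (by simp [hLdef])
            hpos hpair
            (fun p hp => ⟨(hicc p hp).1, hle1 p (by rw [hLeq]; exact hp)⟩)
            (by rw [hca]; exact hlowhalf)
            (by rw [hca]; exact hfuel')
          rw [hca] at ht
          exact ⟨t, hconv t L (fun p hp => hp) ht⟩
        · -- genuine split
          obtain ⟨t₁, ht₁⟩ := ih L₁ a c h1e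
            (fun p hp => hpos p (hmem1 p hp)) hpair1
            (fun p hp => ⟨(hicc p (hmem1 p hp)).1, hle1 p hp⟩)
            (by rw [hca]; exact fun p hp => hlowhalf p (hmem1 p hp))
            (by rw [hca]; exact fun p hp => hfuel' p (hmem1 p hp))
          obtain ⟨t₂, ht₂⟩ := ih L₂ c b h2e
            (fun p hp => hpos p (hmem2 p hp)) hpair2
            (fun p hp => ⟨hge2 p hp, (hicc p (hmem2 p hp)).2⟩)
            (by rw [hbc]; exact fun p hp => hlowhalf p (hmem2 p hp))
            (by rw [hbc]; exact fun p hp => hfuel' p (hmem2 p hp))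
          rw [hca] at ht₁
          rw [hbc] at ht₂
          refine ⟨BinTree.node t₁ t₂, ?_⟩
          have hstep : ∀ (M : List (ℝ × ℝ)) (ld : List ℕ), (∀ p ∈ M, p ∈ L) →
              List.Forall₂ (fun (d : ℕ) p => (d : ℝ) ≤ Real.logb 2 ((b - a) / 2 / p.2) + 1)
                ld M →
              List.Forall₂ (fun (d : ℕ) p => (d : ℝ) ≤ Real.logb 2 ((b - a) / p.2) + 1)
                (ld.map (· + 1)) M := by
            intro M ld hM h
            rw [List.forall₂_map_left_iff]
            refine forall₂_imp_mem h ?_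
            intro d _ p hp hd
            have hp2 := hpos p (hM p hp)
            have harg : (b - a) / 2 / p.2 = ((b - a) / p.2) / 2 := by ring
            have hlog : Real.logb 2 ((b - a) / 2 / p.2)
                = Real.logb 2 ((b - a) / p.2) - 1 := by
              rw [harg, Real.logb_div (by positivity) (by norm_num),
                Real.logb_self_eq_one one_lt_two]
            push_cast
            rw [hlog] at hd
            linarith
          show List.Forall₂ _ ((t₁.leafDepths.map (· + 1)) ++ (t₂.leafDepths.map (· + 1))) L
          rw [← hsplit]
          exact List.rel_append (hstep L₁ _ hmem1 ht₁) (hstep L₂ _ hmem2 ht₂)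

/-- Existence of weight-balanced binary trees: for positive weights `w 1, …, w m`
with total weight `W`, there is a binary tree with exactly `m` leaves in which the
`i`-th leaf (in left-to-right order) has depth at most `logb 2 (W / w i) + 2`. -/
theorem exists_weight_balanced_binTree
    (m : ℕ) (hm : 1 ≤ m) (w : Fin m → ℝ) (hw : ∀ i, 0 < w i) :
    ∃ t : BinTree, ∃ hlen : t.leafDepths.length = m,
      ∀ i : Fin m,
        (t.leafDepths.get (Fin.cast hlen.symm i) : ℝ) ≤
          Real.logb 2 ((∑ j, w j) / w i) + 2 := by
  classical
  set W : ℝ := ∑ j, w j with hWdef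
  have hwle : ∀ i, w i ≤ W := fun i =>
    Finset.single_le_sum (fun j _ => (hw j).le) (Finset.mem_univ i)
  have hWpos : 0 < W := lt_of_lt_of_le (hw ⟨0, hm⟩) (hwle ⟨0, hm⟩)
  set f : Fin m → ℝ × ℝ := fun i => ((∑ k ∈ Finset.Iio i, w k) + w i / 2, w i / 2)
    with hfdef
  set L : List (ℝ × ℝ) := List.ofFn f with hLdef
  have hne : L ≠ [] := by
    rw [hLdef, ← List.length_pos_iff, List.length_ofFn]; omega
  have hpos : ∀ p ∈ L, 0 < p.2 := by
    intro p hp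
    rw [hLdef, List.mem_ofFn] at hp
    obtain ⟨i, rfl⟩ := hp
    exact by simpa [hfdef] using half_pos (hw i)
  have hpair : L.Pairwise (fun p q => p.1 + p.2 ≤ q.1 - q.2) := by
    rw [hLdef, List.pairwise_ofFn]
    intro i j hij
    simp only [hfdef]
    have hsub : insert i (Finset.Iio i) ⊆ Finset.Iio j := by
      intro k hk
      rcases Finset.mem_insert.1 hk with rfl | hk
      · exact Finset.mem_Iio.2 hij
      · exact Finset.mem_Iio.2 ((Finset.mem_Iio.1 hk).trans hij)
    have hsum : (∑ k ∈ insert i (Finset.Iio i), w k) ≤ ∑ k ∈ Finset.Iio j, w k :=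
      Finset.sum_le_sum_of_subset_of_nonneg hsub (fun k _ _ => (hw k).le)
    rw [Finset.sum_insert (by simp)] at hsum
    linarith
  have hicc : ∀ p ∈ L, 0 ≤ p.1 ∧ p.1 ≤ W := by
    intro p hp
    rw [hLdef, List.mem_ofFn] at hp
    obtain ⟨i, rfl⟩ := hp
    have hs0 : 0 ≤ ∑ k ∈ Finset.Iio i, w k :=
      Finset.sum_nonneg fun k _ => (hw k).le
    have hsub : insert i (Finset.Iio i) ⊆ Finset.univ := fun k _ => Finset.mem_univ k
    have hsum : (∑ k ∈ insert i (Finset.Iio i), w k) ≤ W :=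
      Finset.sum_le_sum_of_subset_of_nonneg hsub (fun k _ _ => (hw k).le)
    rw [Finset.sum_insert (by simp)] at hsum
    constructor
    · simp only [hfdef]; have := hw i; linarith
    · simp only [hfdef]; have := hw i; linarith
  have hlow : ∀ p ∈ L, p.2 ≤ 2 * (W - 0) := by
    intro p hp
    rw [hLdef, List.mem_ofFn] at hp
    obtain ⟨i, rfl⟩ := hp
    simp only [hfdef]
    have := hwle i; linarith
  -- choose fuel
  have hmne : (Finset.univ : Finset (Fin m)).Nonempty := ⟨⟨0, hm⟩, Finset.mem_univ _⟩
  set ε : ℝ := Finset.univ.inf' hmne w with hεdef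
  have hεpos : 0 < ε := by
    rw [hεdef, Finset.lt_inf'_iff]
    exact fun i _ => hw i
  have hεle : ∀ i, ε ≤ w i := fun i =>
    Finset.inf'_le w (Finset.mem_univ i)
  obtain ⟨D, hD⟩ := pow_unbounded_of_one_lt (2 * W / ε) (one_lt_two (α := ℝ))
  have hfuel : ∀ p ∈ L, W - 0 ≤ 2 ^ D * p.2 := by
    intro p hp
    rw [hLdef, List.mem_ofFn] at hp
    obtain ⟨i, rfl⟩ := hp
    simp only [hfdef]
    have h1 : 2 * W / ε ≤ 2 ^ D := hD.le
    have h2 : 2 * W ≤ 2 ^ D * ε := by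
      rw [div_le_iff₀ hεpos] at h1; linarith
    have h3 : (2:ℝ) ^ D * ε ≤ 2 ^ D * w i :=
      mul_le_mul_of_nonneg_left (hεle i) (by positivity)
    linarith
  obtain ⟨t, ht⟩ := key_lemma D L 0 W hne hpos hpair hicc hlow hfuel
  have hlens : t.leafDepths.length = m := by
    rw [ht.length_eq, hLdef, List.length_ofFn]
  refine ⟨t, hlens, ?_⟩
  intro i
  have hLlen : L.length = m := by rw [hLdef, List.length_ofFn]
  obtain ⟨-, hget⟩ := List.forall₂_iff_get.1 ht
  have hi1 : (i : ℕ) < t.leafDepths.length := by rw [hlens]; exact i.2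
  have hi2 : (i : ℕ) < L.length := by rw [hLlen]; exact i.2
  have h := hget i hi1 hi2
  have hgetL : L.get ⟨i, hi2⟩ = f i := by
    have heq : L.get ⟨i, hi2⟩
        = (List.ofFn f).get ⟨i, by simpa [hLdef] using hi2⟩ := rfl
    rw [heq, List.get_ofFn]
    congr 1
  rw [hgetL] at h
  simp only [hfdef] at h
  have harg : (W - 0) / (w i / 2) = 2 * (W / w i) := by
    have h0 := (hw i).ne'
    field_simp
    ring
  rw [harg] at h
  have hlog : Real.logb 2 (2 * (W / w i)) = 1 + Real.logb 2 (W / w i) := by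
    rw [Real.logb_mul (by norm_num) (div_pos hWpos (hw i)).ne',
      Real.logb_self_eq_one one_lt_two]
  rw [hlog] at h
  have hidx : t.leafDepths.get (Fin.cast hlens.symm i) = t.leafDepths.get ⟨i, hi1⟩ := rfl
  rw [hidx]
  linarith
end
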